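/- (Type S₃) For α, β, γ ∈ ℂ with αβγ ≠ 0 and αβγ ≠ 1, let A(α,β,γ) = ℂ⟨x,y,z⟩/(yx − αz², zy − βx², xz − γy²). For α', β', γ' ∈ ℂ with α'β'γ' ≠ 0 and α'β'γ' ≠ 1, the algebras A(α,β,γ) and A(α',β',γ') are isomorphic as graded algebras if and only if α'β'γ' = αβγ. -/

import Mathlib

noncomputable section

/-- The free algebra `ℂ⟨x,y,z⟩`. -/
abbrev F3 : Type := FreeAlgebra ℂ (Fin 3)

def X : F3 := FreeAlgebra.ι ℂ 0
def Y : F3 := FreeAlgebra.ι ℂ 1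
def Z : F3 := FreeAlgebra.ι ℂ 2

/-- The relation identifying the three relators with `0`. -/
def rel3 (f₁ f₂ f₃ : F3) : F3 → F3 → Prop :=
  fun a b => (a = f₁ ∨ a = f₂ ∨ a = f₃) ∧ b = 0

/-- `ℂ⟨x,y,z⟩/(f₁,f₂,f₃)`, the quotient by the two-sided ideal generated by `f₁,f₂,f₃`. -/
abbrev QuadAlg (f₁ f₂ f₃ : F3) : Type := RingQuot (rel3 f₁ f₂ f₃)

/-- The linear span of the images of `x, y, z` in the quotient. -/
def genSpan (f₁ f₂ f₃ : F3) : Submodule ℂ (QuadAlg f₁ f₂ f₃) :=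
  Submodule.span ℂ {RingQuot.mkAlgHom ℂ (rel3 f₁ f₂ f₃) X,
                    RingQuot.mkAlgHom ℂ (rel3 f₁ f₂ f₃) Y,
                    RingQuot.mkAlgHom ℂ (rel3 f₁ f₂ f₃) Z}

/-- Isomorphism of graded algebras: a `ℂ`-algebra isomorphism carrying the span of
the images of `x,y,z` onto the span of the images of `x,y,z`. -/
def GrIso (f₁ f₂ f₃ g₁ g₂ g₃ : F3) : Prop :=
  ∃ e : QuadAlg f₁ f₂ f₃ ≃ₐ[ℂ] QuadAlg g₁ g₂ g₃,
    Submodule.map e.toLinearMap (genSpan f₁ f₂ f₃) = genSpan g₁ g₂ g₃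

namespace S3aux

def Tr (r1 r2 r3 : ℂ) : Type := ℂ × (ℂ × ℂ × ℂ) × (ℂ × ℂ × ℂ × ℂ × ℂ × ℂ)

instance (r1 r2 r3 : ℂ) : AddCommGroup (Tr r1 r2 r3) :=
  inferInstanceAs (AddCommGroup (ℂ × (ℂ × ℂ × ℂ) × (ℂ × ℂ × ℂ × ℂ × ℂ × ℂ)))

instance (r1 r2 r3 : ℂ) : Module ℂ (Tr r1 r2 r3) :=
  inferInstanceAs (Module ℂ (ℂ × (ℂ × ℂ × ℂ) × (ℂ × ℂ × ℂ × ℂ × ℂ × ℂ)))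

variable {r1 r2 r3 : ℂ}

@[simp] lemma add_proj0 (x y : Tr r1 r2 r3) : (x + y).1 = x.1 + y.1 := rfl
@[simp] lemma add_proj1 (x y : Tr r1 r2 r3) : (x + y).2.1.1 = x.2.1.1 + y.2.1.1 := rfl
@[simp] lemma add_proj2 (x y : Tr r1 r2 r3) : (x + y).2.1.2.1 = x.2.1.2.1 + y.2.1.2.1 := rfl
@[simp] lemma add_proj3 (x y : Tr r1 r2 r3) : (x + y).2.1.2.2 = x.2.1.2.2 + y.2.1.2.2 := rfl
@[simp] lemma add_proj4 (x y : Tr r1 r2 r3) : (x + y).2.2.1 = x.2.2.1 + y.2.2.1 := rfl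
@[simp] lemma add_proj5 (x y : Tr r1 r2 r3) : (x + y).2.2.2.1 = x.2.2.2.1 + y.2.2.2.1 := rfl
@[simp] lemma add_proj6 (x y : Tr r1 r2 r3) : (x + y).2.2.2.2.1 = x.2.2.2.2.1 + y.2.2.2.2.1 := rfl
@[simp] lemma add_proj7 (x y : Tr r1 r2 r3) : (x + y).2.2.2.2.2.1 = x.2.2.2.2.2.1 + y.2.2.2.2.2.1 := rfl
@[simp] lemma add_proj8 (x y : Tr r1 r2 r3) : (x + y).2.2.2.2.2.2.1 = x.2.2.2.2.2.2.1 + y.2.2.2.2.2.2.1 := rfl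
@[simp] lemma add_proj9 (x y : Tr r1 r2 r3) : (x + y).2.2.2.2.2.2.2 = x.2.2.2.2.2.2.2 + y.2.2.2.2.2.2.2 := rfl
@[simp] lemma sub_proj0 (x y : Tr r1 r2 r3) : (x - y).1 = x.1 - y.1 := rfl
@[simp] lemma sub_proj1 (x y : Tr r1 r2 r3) : (x - y).2.1.1 = x.2.1.1 - y.2.1.1 := rfl
@[simp] lemma sub_proj2 (x y : Tr r1 r2 r3) : (x - y).2.1.2.1 = x.2.1.2.1 - y.2.1.2.1 := rfl
@[simp] lemma sub_proj3 (x y : Tr r1 r2 r3) : (x - y).2.1.2.2 = x.2.1.2.2 - y.2.1.2.2 := rfl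
@[simp] lemma sub_proj4 (x y : Tr r1 r2 r3) : (x - y).2.2.1 = x.2.2.1 - y.2.2.1 := rfl
@[simp] lemma sub_proj5 (x y : Tr r1 r2 r3) : (x - y).2.2.2.1 = x.2.2.2.1 - y.2.2.2.1 := rfl
@[simp] lemma sub_proj6 (x y : Tr r1 r2 r3) : (x - y).2.2.2.2.1 = x.2.2.2.2.1 - y.2.2.2.2.1 := rfl
@[simp] lemma sub_proj7 (x y : Tr r1 r2 r3) : (x - y).2.2.2.2.2.1 = x.2.2.2.2.2.1 - y.2.2.2.2.2.1 := rfl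
@[simp] lemma sub_proj8 (x y : Tr r1 r2 r3) : (x - y).2.2.2.2.2.2.1 = x.2.2.2.2.2.2.1 - y.2.2.2.2.2.2.1 := rfl
@[simp] lemma sub_proj9 (x y : Tr r1 r2 r3) : (x - y).2.2.2.2.2.2.2 = x.2.2.2.2.2.2.2 - y.2.2.2.2.2.2.2 := rfl
@[simp] lemma zero_proj0 : (0 : Tr r1 r2 r3).1 = 0 := rfl
@[simp] lemma zero_proj1 : (0 : Tr r1 r2 r3).2.1.1 = 0 := rfl
@[simp] lemma zero_proj2 : (0 : Tr r1 r2 r3).2.1.2.1 = 0 := rfl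
@[simp] lemma zero_proj3 : (0 : Tr r1 r2 r3).2.1.2.2 = 0 := rfl
@[simp] lemma zero_proj4 : (0 : Tr r1 r2 r3).2.2.1 = 0 := rfl
@[simp] lemma zero_proj5 : (0 : Tr r1 r2 r3).2.2.2.1 = 0 := rfl
@[simp] lemma zero_proj6 : (0 : Tr r1 r2 r3).2.2.2.2.1 = 0 := rfl
@[simp] lemma zero_proj7 : (0 : Tr r1 r2 r3).2.2.2.2.2.1 = 0 := rfl
@[simp] lemma zero_proj8 : (0 : Tr r1 r2 r3).2.2.2.2.2.2.1 = 0 := rfl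
@[simp] lemma zero_proj9 : (0 : Tr r1 r2 r3).2.2.2.2.2.2.2 = 0 := rfl
@[simp] lemma smul_proj0 (r : ℂ) (x : Tr r1 r2 r3) : (r • x).1 = r * x.1 := rfl
@[simp] lemma smul_proj1 (r : ℂ) (x : Tr r1 r2 r3) : (r • x).2.1.1 = r * x.2.1.1 := rfl
@[simp] lemma smul_proj2 (r : ℂ) (x : Tr r1 r2 r3) : (r • x).2.1.2.1 = r * x.2.1.2.1 := rfl
@[simp] lemma smul_proj3 (r : ℂ) (x : Tr r1 r2 r3) : (r • x).2.1.2.2 = r * x.2.1.2.2 := rfl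
@[simp] lemma smul_proj4 (r : ℂ) (x : Tr r1 r2 r3) : (r • x).2.2.1 = r * x.2.2.1 := rfl
@[simp] lemma smul_proj5 (r : ℂ) (x : Tr r1 r2 r3) : (r • x).2.2.2.1 = r * x.2.2.2.1 := rfl
@[simp] lemma smul_proj6 (r : ℂ) (x : Tr r1 r2 r3) : (r • x).2.2.2.2.1 = r * x.2.2.2.2.1 := rfl
@[simp] lemma smul_proj7 (r : ℂ) (x : Tr r1 r2 r3) : (r • x).2.2.2.2.2.1 = r * x.2.2.2.2.2.1 := rfl
@[simp] lemma smul_proj8 (r : ℂ) (x : Tr r1 r2 r3) : (r • x).2.2.2.2.2.2.1 = r * x.2.2.2.2.2.2.1 := rfl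
@[simp] lemma smul_proj9 (r : ℂ) (x : Tr r1 r2 r3) : (r • x).2.2.2.2.2.2.2 = r * x.2.2.2.2.2.2.2 := rfl

lemma trExt {x y : Tr r1 r2 r3} (h0 : x.1 = y.1) (h1 : x.2.1.1 = y.2.1.1) (h2 : x.2.1.2.1 = y.2.1.2.1) (h3 : x.2.1.2.2 = y.2.1.2.2) (h4 : x.2.2.1 = y.2.2.1) (h5 : x.2.2.2.1 = y.2.2.2.1) (h6 : x.2.2.2.2.1 = y.2.2.2.2.1) (h7 : x.2.2.2.2.2.1 = y.2.2.2.2.2.1) (h8 : x.2.2.2.2.2.2.1 = y.2.2.2.2.2.2.1) (h9 : x.2.2.2.2.2.2.2 = y.2.2.2.2.2.2.2) : x = y :=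
  Prod.ext h0 (Prod.ext (Prod.ext h1 (Prod.ext h2 h3))
    (Prod.ext h4 (Prod.ext h5 (Prod.ext h6 (Prod.ext h7 (Prod.ext h8 h9))))))

def mulTr (r1 r2 r3 : ℂ) (x y : Tr r1 r2 r3) : Tr r1 r2 r3 :=
  (x.1 * y.1,
   (x.1 * y.2.1.1 + y.1 * x.2.1.1, x.1 * y.2.1.2.1 + y.1 * x.2.1.2.1, x.1 * y.2.1.2.2 + y.1 * x.2.1.2.2),
   (x.1 * y.2.2.1 + y.1 * x.2.2.1 + (x.2.1.1 * y.2.1.2.1), x.1 * y.2.2.2.1 + y.1 * x.2.2.2.1 + (x.2.1.2.1 * y.2.1.2.2), x.1 * y.2.2.2.2.1 + y.1 * x.2.2.2.2.1 + (x.2.1.2.2 * y.2.1.1), x.1 * y.2.2.2.2.2.1 + y.1 * x.2.2.2.2.2.1 + (x.2.1.2.1 * y.2.1.1 + r1 * (x.2.1.2.2 * y.2.1.2.2)), x.1 * y.2.2.2.2.2.2.1 + y.1 * x.2.2.2.2.2.2.1 + (x.2.1.2.2 * y.2.1.2.1 + r2 * (x.2.1.1 * y.2.1.1)), x.1 * y.2.2.2.2.2.2.2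 + y.1 * x.2.2.2.2.2.2.2 + (x.2.1.1 * y.2.1.2.2 + r3 * (x.2.1.2.1 * y.2.1.2.1))))

def oneTr (r1 r2 r3 : ℂ) : Tr r1 r2 r3 := (1, (0,0,0), (0,0,0,0,0,0))

instance (r1 r2 r3 : ℂ) : Ring (Tr r1 r2 r3) where
  __ := (inferInstance : AddCommGroup (Tr r1 r2 r3))
  mul := mulTr r1 r2 r3
  one := oneTr r1 r2 r3
  left_distrib x y z := by
    show mulTr _ _ _ x (y + z) = mulTr _ _ _ x y + mulTr _ _ _ x z
    apply trExt <;> (simp only [add_proj0, add_proj1, add_proj2, add_proj3, add_proj4, add_proj5, add_proj6, add_proj7, add_proj8, add_proj9]; simp only [mulTr, add_proj0, add_proj1, add_proj2, add_proj3, add_proj4, add_proj5, add_proj6, add_proj7, add_proj8, add_proj9]; ring)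
  right_distrib x y z := by
    show mulTr _ _ _ (x + y) z = mulTr _ _ _ x z + mulTr _ _ _ y z
    apply trExt <;> (simp only [add_proj0, add_proj1, add_proj2, add_proj3, add_proj4, add_proj5, add_proj6, add_proj7, add_proj8, add_proj9]; simp only [mulTr, add_proj0, add_proj1, add_proj2, add_proj3, add_proj4, add_proj5, add_proj6, add_proj7, add_proj8, add_proj9]; ring)
  zero_mul x := by
    show mulTr _ _ _ 0 x = 0
    apply trExt <;> (simp only [zero_proj0, zero_proj1, zero_proj2, zero_proj3, zero_proj4, zero_proj5, zero_proj6, zero_proj7, zero_proj8, zero_proj9]; simp only [mulTr, zero_proj0, zero_proj1, zero_proj2, zero_proj3, zero_proj4, zero_proj5, zero_proj6, zero_proj7, zero_proj8, zero_proj9]; ring)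
  mul_zero x := by
    show mulTr _ _ _ x 0 = 0
    apply trExt <;> (simp only [zero_proj0, zero_proj1, zero_proj2, zero_proj3, zero_proj4, zero_proj5, zero_proj6, zero_proj7, zero_proj8, zero_proj9]; simp only [mulTr, zero_proj0, zero_proj1, zero_proj2, zero_proj3, zero_proj4, zero_proj5, zero_proj6, zero_proj7, zero_proj8, zero_proj9]; ring)
  mul_assoc x y z := by
    show mulTr _ _ _ (mulTr _ _ _ x y) z = mulTr _ _ _ x (mulTr _ _ _ y z)
    apply trExt <;> (simp only [mulTr]; ring)
  one_mul x := by
    show mulTr _ _ _ (oneTr _ _ _) x = x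
    apply trExt <;> (simp only [mulTr, oneTr]; ring)
  mul_one x := by
    show mulTr _ _ _ x (oneTr _ _ _) = x
    apply trExt <;> (simp only [mulTr, oneTr]; ring)

lemma mul_def {r1 r2 r3 : ℂ} (x y : Tr r1 r2 r3) : x * y = mulTr r1 r2 r3 x y := rfl

instance (r1 r2 r3 : ℂ) : Algebra ℂ (Tr r1 r2 r3) := by
  refine Algebra.ofModule ?_ ?_ <;>
  · intro r x y
    apply trExt <;> (simp only [smul_proj0, smul_proj1, smul_proj2, smul_proj3, smul_proj4, smul_proj5, smul_proj6, smul_proj7, smul_proj8, smul_proj9]; simp only [mul_def, mulTr, smul_proj0, smul_proj1, smul_proj2, smul_proj3, smul_proj4, smul_proj5, smul_proj6, smul_proj7, smul_proj8, smul_proj9]; ring)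



variable (r1 r2 r3 : ℂ)

def Xg : Tr r1 r2 r3 := (0, (1,0,0), (0,0,0,0,0,0))
def Yg : Tr r1 r2 r3 := (0, (0,1,0), (0,0,0,0,0,0))
def Zg : Tr r1 r2 r3 := (0, (0,0,1), (0,0,0,0,0,0))

def trLift : F3 →ₐ[ℂ] Tr r1 r2 r3 :=
  FreeAlgebra.lift ℂ ![Xg r1 r2 r3, Yg r1 r2 r3, Zg r1 r2 r3]

@[simp] lemma trLift_X : trLift r1 r2 r3 X = Xg r1 r2 r3 := by
  simp [trLift, X, FreeAlgebra.lift_ι_apply]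
@[simp] lemma trLift_Y : trLift r1 r2 r3 Y = Yg r1 r2 r3 := by
  simp [trLift, Y, FreeAlgebra.lift_ι_apply]
@[simp] lemma trLift_Z : trLift r1 r2 r3 Z = Zg r1 r2 r3 := by
  simp [trLift, Z, FreeAlgebra.lift_ι_apply]

variable (av bv cv : ℂ)

lemma trLift_rel1 (h : av * r1 = 1) : trLift r1 r2 r3 (Y*X - av • (Z*Z)) = 0 := by
  rw [map_sub, map_smul, map_mul, map_mul, trLift_X, trLift_Y, trLift_Z]
  apply trExt <;>
    simp only [sub_proj0, sub_proj1, sub_proj2, sub_proj3, sub_proj4, sub_proj5, sub_proj6,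
      sub_proj7, sub_proj8, sub_proj9, smul_proj0, smul_proj1, smul_proj2, smul_proj3, smul_proj4,
      smul_proj5, smul_proj6, smul_proj7, smul_proj8, smul_proj9] <;>
    simp only [sub_proj0, sub_proj1, sub_proj2, sub_proj3, sub_proj4, sub_proj5, sub_proj6,
      sub_proj7, sub_proj8, sub_proj9, smul_proj0, smul_proj1, smul_proj2, smul_proj3, smul_proj4,
      smul_proj5, smul_proj6, smul_proj7, smul_proj8, smul_proj9, zero_proj0, zero_proj1,
      zero_proj2, zero_proj3, zero_proj4, zero_proj5, zero_proj6, zero_proj7, zero_proj8,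
      zero_proj9, mul_def, mulTr] <;>
    simp only [Xg, Yg, Zg] <;>
    first | ring1 | linear_combination -h

lemma trLift_rel2 (h : bv * r2 = 1) : trLift r1 r2 r3 (Z*Y - bv • (X*X)) = 0 := by
  rw [map_sub, map_smul, map_mul, map_mul, trLift_X, trLift_Y, trLift_Z]
  apply trExt <;>
    simp only [sub_proj0, sub_proj1, sub_proj2, sub_proj3, sub_proj4, sub_proj5, sub_proj6,
      sub_proj7, sub_proj8, sub_proj9, smul_proj0, smul_proj1, smul_proj2, smul_proj3, smul_proj4,
      smul_proj5, smul_proj6, smul_proj7, smul_proj8, smul_proj9] <;>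
    simp only [sub_proj0, sub_proj1, sub_proj2, sub_proj3, sub_proj4, sub_proj5, sub_proj6,
      sub_proj7, sub_proj8, sub_proj9, smul_proj0, smul_proj1, smul_proj2, smul_proj3, smul_proj4,
      smul_proj5, smul_proj6, smul_proj7, smul_proj8, smul_proj9, zero_proj0, zero_proj1,
      zero_proj2, zero_proj3, zero_proj4, zero_proj5, zero_proj6, zero_proj7, zero_proj8,
      zero_proj9, mul_def, mulTr] <;>
    simp only [Xg, Yg, Zg] <;>
    first | ring1 | linear_combination -h

lemma trLift_rel3 (h : cv * r3 = 1) : trLift r1 r2 r3 (X*Z - cv • (Y*Y)) = 0 := by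
  rw [map_sub, map_smul, map_mul, map_mul, trLift_X, trLift_Y, trLift_Z]
  apply trExt <;>
    simp only [sub_proj0, sub_proj1, sub_proj2, sub_proj3, sub_proj4, sub_proj5, sub_proj6,
      sub_proj7, sub_proj8, sub_proj9, smul_proj0, smul_proj1, smul_proj2, smul_proj3, smul_proj4,
      smul_proj5, smul_proj6, smul_proj7, smul_proj8, smul_proj9] <;>
    simp only [sub_proj0, sub_proj1, sub_proj2, sub_proj3, sub_proj4, sub_proj5, sub_proj6,
      sub_proj7, sub_proj8, sub_proj9, smul_proj0, smul_proj1, smul_proj2, smul_proj3, smul_proj4,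
      smul_proj5, smul_proj6, smul_proj7, smul_proj8, smul_proj9, zero_proj0, zero_proj1,
      zero_proj2, zero_proj3, zero_proj4, zero_proj5, zero_proj6, zero_proj7, zero_proj8,
      zero_proj9, mul_def, mulTr] <;>
    simp only [Xg, Yg, Zg] <;>
    first | ring1 | linear_combination -h

def quadToTr (h1 : av * r1 = 1) (h2 : bv * r2 = 1) (h3 : cv * r3 = 1) :
    QuadAlg (Y*X - av • (Z*Z)) (Z*Y - bv • (X*X)) (X*Z - cv • (Y*Y)) →ₐ[ℂ] Tr r1 r2 r3 :=
  RingQuot.liftAlgHom ℂ ⟨trLift r1 r2 r3, by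
    rintro x y ⟨(rfl | rfl | rfl), rfl⟩
    · rw [map_zero]; exact trLift_rel1 r1 r2 r3 av h1
    · rw [map_zero]; exact trLift_rel2 r1 r2 r3 bv h2
    · rw [map_zero]; exact trLift_rel3 r1 r2 r3 cv h3⟩

@[simp] lemma quadToTr_mk (h1 : av * r1 = 1) (h2 : bv * r2 = 1) (h3 : cv * r3 = 1) (w : F3) :
    quadToTr r1 r2 r3 av bv cv h1 h2 h3
      (RingQuot.mkAlgHom ℂ (rel3 (Y*X - av • (Z*Z)) (Z*Y - bv • (X*X)) (X*Z - cv • (Y*Y))) w)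
      = trLift r1 r2 r3 w :=
  RingQuot.liftAlgHom_mkAlgHom_apply ℂ _ _ _



section Helpers

lemma mem_span_triple {M : Type*} [AddCommGroup M] [Module ℂ M] {v1 v2 v3 x : M}
    (h : x ∈ Submodule.span ℂ {v1, v2, v3}) :
    ∃ c1 c2 c3 : ℂ, x = c1 • v1 + c2 • v2 + c3 • v3 := by
  rw [Submodule.mem_span_insert] at h
  obtain ⟨c1, z1, hz1, rfl⟩ := h
  rw [Submodule.mem_span_insert] at hz1
  obtain ⟨c2, z2, hz2, rfl⟩ := hz1
  rw [Submodule.mem_span_singleton] at hz2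
  obtain ⟨c3, rfl⟩ := hz2
  exact ⟨c1, c2, c3, by rw [add_assoc]⟩

lemma smul_span_mem {M : Type*} [AddCommGroup M] [Module ℂ M] {s : ℂ} (hs : s ≠ 0) {x : M}
    {T : Set M} (h : s • x ∈ T) : x ∈ Submodule.span ℂ T := by
  have h2 : s • x ∈ Submodule.span ℂ T := Submodule.subset_span h
  have h3 : s⁻¹ • (s • x) ∈ Submodule.span ℂ T := Submodule.smul_mem _ _ h2
  rwa [smul_smul, inv_mul_cancel₀ hs, one_smul] at h3

lemma span_scaled {M : Type*} [AddCommGroup M] [Module ℂ M] {s t u : ℂ} (hs : s ≠ 0)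
    (ht : t ≠ 0) (hu : u ≠ 0) (x1 x2 x3 : M) :
    Submodule.span ℂ {s • x1, t • x2, u • x3} = Submodule.span ℂ {x1, x2, x3} := by
  apply le_antisymm
  · rw [Submodule.span_le]
    intro w hw
    simp only [Set.mem_insert_iff, Set.mem_singleton_iff] at hw
    rcases hw with rfl | rfl | rfl
    · exact Submodule.smul_mem _ _ (Submodule.subset_span (by simp))
    · exact Submodule.smul_mem _ _ (Submodule.subset_span (by simp))
    · exact Submodule.smul_mem _ _ (Submodule.subset_span (by simp))
  · rw [Submodule.span_le]
    intro w hw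
    simp only [Set.mem_insert_iff, Set.mem_singleton_iff] at hw
    rcases hw with rfl | rfl | rfl
    · exact smul_span_mem hs (by simp)
    · exact smul_span_mem ht (by simp)
    · exact smul_span_mem hu (by simp)

lemma three_linear {p1 q1 p2 q2 p3 q3 : ℂ}
    (h : ∀ x : ℂ, (p1 + q1*x) * (p2 + q2*x) * (p3 + q3*x) = 0) :
    (p1 = 0 ∧ q1 = 0) ∨ (p2 = 0 ∧ q2 = 0) ∨ (p3 = 0 ∧ q3 = 0) := by
  classical
  let f : ℂ → Polynomial ℂ := fun _ => 0
  have key : (Polynomial.C p1 + Polynomial.C q1 * Polynomial.X) *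
      (Polynomial.C p2 + Polynomial.C q2 * Polynomial.X) *
      (Polynomial.C p3 + Polynomial.C q3 * Polynomial.X) = 0 := by
    apply Polynomial.funext
    intro x
    simpa using h x
  rcases mul_eq_zero.mp key with key2 | h3
  · rcases mul_eq_zero.mp key2 with h1 | h2
    · left
      constructor
      · have := congrArg (fun p => Polynomial.coeff p 0) h1; simpa using this
      · have := congrArg (fun p => Polynomial.coeff p 1) h1; simpa using this
    · right; left
      constructor
      · have := congrArg (fun p => Polynomial.coeff p 0) h2; simpa using this
      · have := congrArg (fun p => Polynomial.coeff p 1) h2; simpa using this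
  · right; right
    constructor
    · have := congrArg (fun p => Polynomial.coeff p 0) h3; simpa using this
    · have := congrArg (fun p => Polynomial.coeff p 1) h3; simpa using this

end Helpers

section Reverse

variable (aw bw cw : ℂ)

def mkh : F3 →ₐ[ℂ] QuadAlg (Y*X - aw•(Z*Z)) (Z*Y - bw•(X*X)) (X*Z - cw•(Y*Y)) :=
  RingQuot.mkAlgHom ℂ _

lemma mkh_rel1 : mkh aw bw cw (Y*X) = aw • mkh aw bw cw (Z*Z) := by
  have h : mkh aw bw cw (Y*X - aw•(Z*Z)) = mkh aw bw cw 0 :=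
    RingQuot.mkAlgHom_rel ℂ ⟨Or.inl rfl, rfl⟩
  rw [map_zero, map_sub, map_smul, sub_eq_zero] at h
  exact h

lemma mkh_rel2 : mkh aw bw cw (Z*Y) = bw • mkh aw bw cw (X*X) := by
  have h : mkh aw bw cw (Z*Y - bw•(X*X)) = mkh aw bw cw 0 :=
    RingQuot.mkAlgHom_rel ℂ ⟨Or.inr (Or.inl rfl), rfl⟩
  rw [map_zero, map_sub, map_smul, sub_eq_zero] at h
  exact h

lemma mkh_rel3 : mkh aw bw cw (X*Z) = cw • mkh aw bw cw (Y*Y) := by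
  have h : mkh aw bw cw (X*Z - cw•(Y*Y)) = mkh aw bw cw 0 :=
    RingQuot.mkAlgHom_rel ℂ ⟨Or.inr (Or.inr rfl), rfl⟩
  rw [map_zero, map_sub, map_smul, sub_eq_zero] at h
  exact h

variable (s t u : ℂ)

def scaleHom : F3 →ₐ[ℂ] QuadAlg (Y*X - aw•(Z*Z)) (Z*Y - bw•(X*X)) (X*Z - cw•(Y*Y)) :=
  FreeAlgebra.lift ℂ ![s • mkh aw bw cw X, t • mkh aw bw cw Y, u • mkh aw bw cw Z]

@[simp] lemma scaleHom_X : scaleHom aw bw cw s t u X = s • mkh aw bw cw X := by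
  simp only [scaleHom]
  exact FreeAlgebra.lift_ι_apply _ _
@[simp] lemma scaleHom_Y : scaleHom aw bw cw s t u Y = t • mkh aw bw cw Y := by
  simp only [scaleHom]
  exact FreeAlgebra.lift_ι_apply _ _
@[simp] lemma scaleHom_Z : scaleHom aw bw cw s t u Z = u • mkh aw bw cw Z := by
  simp only [scaleHom]
  exact FreeAlgebra.lift_ι_apply _ _

variable (av bv cv : ℂ)

lemma scaleHom_rel1 (hA : t*s*aw = av*u^2) :
    scaleHom aw bw cw s t u (Y*X - av • (Z*Z)) = 0 := by
  rw [map_sub, map_smul, map_mul, map_mul, scaleHom_X, scaleHom_Y, scaleHom_Z,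
    smul_mul_smul_comm, smul_mul_smul_comm, ← map_mul, ← map_mul, mkh_rel1,
    smul_smul, smul_smul, ← sub_smul]
  rw [show t*s*aw - av*(u*u) = 0 by linear_combination hA, zero_smul]

lemma scaleHom_rel2 (hB : u*t*bw = bv*s^2) :
    scaleHom aw bw cw s t u (Z*Y - bv • (X*X)) = 0 := by
  rw [map_sub, map_smul, map_mul, map_mul, scaleHom_X, scaleHom_Y, scaleHom_Z,
    smul_mul_smul_comm, smul_mul_smul_comm, ← map_mul, ← map_mul, mkh_rel2,
    smul_smul, smul_smul, ← sub_smul]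
  rw [show u*t*bw - bv*(s*s) = 0 by linear_combination hB, zero_smul]

lemma scaleHom_rel3 (hC : s*u*cw = cv*t^2) :
    scaleHom aw bw cw s t u (X*Z - cv • (Y*Y)) = 0 := by
  rw [map_sub, map_smul, map_mul, map_mul, scaleHom_X, scaleHom_Y, scaleHom_Z,
    smul_mul_smul_comm, smul_mul_smul_comm, ← map_mul, ← map_mul, mkh_rel3,
    smul_smul, smul_smul, ← sub_smul]
  rw [show s*u*cw - cv*(t*t) = 0 by linear_combination hC, zero_smul]

def quadScale (hA : t*s*aw = av*u^2) (hB : u*t*bw = bv*s^2) (hC : s*u*cw = cv*t^2) :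
    QuadAlg (Y*X - av•(Z*Z)) (Z*Y - bv•(X*X)) (X*Z - cv•(Y*Y)) →ₐ[ℂ]
    QuadAlg (Y*X - aw•(Z*Z)) (Z*Y - bw•(X*X)) (X*Z - cw•(Y*Y)) :=
  RingQuot.liftAlgHom ℂ ⟨scaleHom aw bw cw s t u, by
    rintro x y ⟨(rfl | rfl | rfl), rfl⟩
    · rw [map_zero]; exact scaleHom_rel1 aw bw cw s t u av hA
    · rw [map_zero]; exact scaleHom_rel2 aw bw cw s t u bv hB
    · rw [map_zero]; exact scaleHom_rel3 aw bw cw s t u cv hC⟩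

@[simp] lemma quadScale_mk (hA : t*s*aw = av*u^2) (hB : u*t*bw = bv*s^2)
    (hC : s*u*cw = cv*t^2) (w : F3) :
    quadScale aw bw cw s t u av bv cv hA hB hC (mkh av bv cv w)
      = scaleHom aw bw cw s t u w :=
  RingQuot.liftAlgHom_mkAlgHom_apply ℂ _ _ _

lemma reverse_dir (hs : s ≠ 0) (ht : t ≠ 0) (hu : u ≠ 0)
    (hA : t*s*aw = av*u^2) (hB : u*t*bw = bv*s^2) (hC : s*u*cw = cv*t^2) :
    GrIso (Y*X - av•(Z*Z)) (Z*Y - bv•(X*X)) (X*Z - cv•(Y*Y))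
          (Y*X - aw•(Z*Z)) (Z*Y - bw•(X*X)) (X*Z - cw•(Y*Y)) := by
  have hA' : t⁻¹*s⁻¹*av = aw*(u⁻¹)^2 := by
    field_simp
    linear_combination -hA
  have hB' : u⁻¹*t⁻¹*bv = bw*(s⁻¹)^2 := by
    field_simp
    linear_combination -hB
  have hC' : s⁻¹*u⁻¹*cv = cw*(t⁻¹)^2 := by
    field_simp
    linear_combination -hC
  let f := quadScale aw bw cw s t u av bv cv hA hB hC
  let g := quadScale av bv cv s⁻¹ t⁻¹ u⁻¹ aw bw cw hA' hB' hC'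
  have hfg : f.comp g = AlgHom.id ℂ _ := by
    apply RingQuot.ringQuot_ext'
    apply FreeAlgebra.hom_ext
    funext i
    fin_cases i
    · show f (g (mkh aw bw cw X)) = mkh aw bw cw X
      simp only [f, g, quadScale_mk, scaleHom_X, map_smul, smul_smul]
      rw [inv_mul_cancel₀ hs, one_smul]
    · show f (g (mkh aw bw cw Y)) = mkh aw bw cw Y
      simp only [f, g, quadScale_mk, scaleHom_Y, map_smul, smul_smul]
      rw [inv_mul_cancel₀ ht, one_smul]
    · show f (g (mkh aw bw cw Z)) = mkh aw bw cw Z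
      simp only [f, g, quadScale_mk, scaleHom_Z, map_smul, smul_smul]
      rw [inv_mul_cancel₀ hu, one_smul]
  have hgf : g.comp f = AlgHom.id ℂ _ := by
    apply RingQuot.ringQuot_ext'
    apply FreeAlgebra.hom_ext
    funext i
    fin_cases i
    · show g (f (mkh av bv cv X)) = mkh av bv cv X
      simp only [f, g, quadScale_mk, scaleHom_X, map_smul, smul_smul]
      rw [mul_inv_cancel₀ hs, one_smul]
    · show g (f (mkh av bv cv Y)) = mkh av bv cv Y
      simp only [f, g, quadScale_mk, scaleHom_Y, map_smul, smul_smul]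
      rw [mul_inv_cancel₀ ht, one_smul]
    · show g (f (mkh av bv cv Z)) = mkh av bv cv Z
      simp only [f, g, quadScale_mk, scaleHom_Z, map_smul, smul_smul]
      rw [mul_inv_cancel₀ hu, one_smul]
  refine ⟨AlgEquiv.ofAlgHom f g hfg hgf, ?_⟩
  show Submodule.map _ (genSpan _ _ _) = genSpan _ _ _
  rw [genSpan, genSpan, Submodule.map_span, Set.image_insert_eq, Set.image_insert_eq,
    Set.image_singleton]
  have e1 : (AlgEquiv.ofAlgHom f g hfg hgf).toLinearMap
      (RingQuot.mkAlgHom ℂ _ X) = s • mkh aw bw cw X := by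
    show f (mkh av bv cv X) = _
    simp [f, quadScale_mk]
  have e2 : (AlgEquiv.ofAlgHom f g hfg hgf).toLinearMap
      (RingQuot.mkAlgHom ℂ _ Y) = t • mkh aw bw cw Y := by
    show f (mkh av bv cv Y) = _
    simp [f, quadScale_mk]
  have e3 : (AlgEquiv.ofAlgHom f g hfg hgf).toLinearMap
      (RingQuot.mkAlgHom ℂ _ Z) = u • mkh aw bw cw Z := by
    show f (mkh av bv cv Z) = _
    simp [f, quadScale_mk]
  rw [e1, e2, e3, span_scaled hs ht hu]
  rfl

end Reverse



lemma reverse_main (al be ga alp bep gap : ℂ) (h0 : al*be*ga ≠ 0) (h0' : alp*bep*gap ≠ 0)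
    (hp : alp*bep*gap = al*be*ga) :
    GrIso (Y*X - al•(Z*Z)) (Z*Y - be•(X*X)) (X*Z - ga•(Y*Y))
          (Y*X - alp•(Z*Z)) (Z*Y - bep•(X*X)) (X*Z - gap•(Y*Y)) := by
  have hal : al ≠ 0 := fun h => h0 (by rw [h, zero_mul, zero_mul])
  have hbe : be ≠ 0 := fun h => h0 (by rw [h, mul_zero, zero_mul])
  have hga : ga ≠ 0 := fun h => h0 (by rw [h, mul_zero])
  have halp : alp ≠ 0 := fun h => h0' (by rw [h, zero_mul, zero_mul])
  have hbep : bep ≠ 0 := fun h => h0' (by rw [h, mul_zero, zero_mul])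
  have hgap : gap ≠ 0 := fun h => h0' (by rw [h, mul_zero])
  obtain ⟨t, ht3⟩ : ∃ t : ℂ, t^3 = be*gap/(bep*ga) :=
    IsAlgClosed.exists_pow_nat_eq _ (by norm_num)
  have hq : be*gap/(bep*ga) ≠ 0 := div_ne_zero (mul_ne_zero hbe hgap) (mul_ne_zero hbep hga)
  have ht : t ≠ 0 := by
    intro h
    apply hq
    rw [← ht3, h]
    norm_num
  have ht3' : t^3*(bep*ga) = be*gap := by
    rw [ht3]
    field_simp
  set u : ℂ := ga*t^2/gap with hu_def
  have hu : u ≠ 0 := div_ne_zero (mul_ne_zero hga (pow_ne_zero 2 ht)) hgap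
  have hu2 : u * gap = ga*t^2 := by
    rw [hu_def]
    exact div_mul_cancel₀ _ hgap
  have hmul : (bep*ga*gap^2 : ℂ) ≠ 0 :=
    mul_ne_zero (mul_ne_zero hbep hga) (pow_ne_zero 2 hgap)
  have hC : (1:ℂ)*u*gap = ga*t^2 := by linear_combination hu2
  have hB : u*t*bep = be*(1:ℂ)^2 := by
    apply mul_left_cancel₀ hgap
    linear_combination (t*bep)*hu2 + ht3'
  have hA : t*(1:ℂ)*alp = al*u^2 := by
    apply mul_left_cancel₀ hmul
    linear_combination (-(al*bep*ga)*(u*gap + ga*t^2))*hu2 + (-(al*ga^2*t))*ht3' + (t*gap*ga)*hp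
  exact reverse_dir alp bep gap 1 t u al be ga one_ne_zero ht hu hA hB hC


set_option maxHeartbeats 4000000 in
lemma key_identity (a1 a2 a3 b1 b2 b3 c1 c2 c3 al be ga alp bep gap u1 u2 u3 : ℂ)
    (he0 : (-1)*c1*c2*al + a2*b1 = 0)
    (he1 : (-1)*c2*c3*al + a3*b2 = 0)
    (he2 : (-1)*c1*c3*al + a1*b3 = 0)
    (he3 : (-1)*c3^2*al + (-1)*c1*c2*al*alp + a3*b3 + a1*b2*alp = 0)
    (he4 : (-1)*c2*c3*al*bep + (-1)*c1^2*al + a2*b3*bep + a1*b1 = 0)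
    (he5 : (-1)*c2^2*al + (-1)*c1*c3*al*gap + a3*b1*gap + a2*b2 = 0)
    (he6 : b2*c1 + (-1)*a1*a2*be = 0)
    (he7 : b3*c2 + (-1)*a2*a3*be = 0)
    (he8 : b1*c3 + (-1)*a1*a3*be = 0)
    (he9 : b3*c3 + b1*c2*alp + (-1)*a3^2*be + (-1)*a1*a2*be*alp = 0)
    (he10 : b2*c3*bep + b1*c1 + (-1)*a2*a3*be*bep + (-1)*a1^2*be = 0)
    (he11 : b3*c1*gap + b2*c2 + (-1)*a2^2*be + (-1)*a1*a3*be*gap = 0)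
    (he12 : (-1)*b1*b2*ga + a1*c2 = 0)
    (he13 : (-1)*b2*b3*ga + a2*c3 = 0)
    (he14 : (-1)*b1*b3*ga + a3*c1 = 0)
    (he15 : (-1)*b3^2*ga + (-1)*b1*b2*ga*alp + a3*c3 + a2*c1*alp = 0)
    (he16 : (-1)*b2*b3*ga*bep + (-1)*b1^2*ga + a3*c2*bep + a1*c1 = 0)
    (he17 : (-1)*b2^2*ga + (-1)*b1*b3*ga*gap + a2*c2 + a1*c3*gap = 0)
    : (1 - al*be*ga) * ((a1*u1+a2*u2+a3*u3)*(b1*u1+b2*u2+b3*u3)*(c1*u1+c2*u2+c3*u3)) * ((-1)*a3*b2*c1 + a3*b1*c2 + a2*b3*c1 + (-1)*a2*b1*c3 + (-1)*a1*b3*c2 + a1*b2*c3) = ((-1)*b2*b3^2*c1^2*c2*al*ga + 3*b1*b2*b3*c1*c2*c3*al*ga + (-1)*b1*b2^2*c1*c3^2*al*ga + (-1)*b1^2*b3*c2^2*c3*al*ga + a3*b3*c1^2*c2^2*al + (-1)*a3*b1*c1*c2^2*c3*al + (-1)*a3*b1^2*b2*b3*c2*ga + a3*b1^2*b2^2*c3*ga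 + a3^2*b1^2*c2^2 + (-1)*a2*b3*c1^2*c2*c3*al + a2*b2*c1^2*c3^2*al + (-1)*a2*b1*b2*b3^2*c1*ga + a2*b1^2*b3^2*c2*ga + (-1)*a2*a3*b1*b3*c1*c2*al*be*ga + (-1)*a2*a3*b1*b2*c1*c3 + a2*a3*b1*b2*c1*c3*al*be*ga + (-1)*a2*a3^2*b1^2*b2*be*ga + a2^2*b3^2*c1^2 + (-1)*a2^2*a3*c1^2*c3*al*be + a2^2*a3^2*b1*c1*be + (-1)*a1*b2*c1*c2*c3^2*al + a1*b2^2*b3^2*c1*ga + a1*b1*c2^2*c3^2*al + (-1)*a1*b1*b2^2*b3*c3*ga + (-1)*a1*a3*b2*b3*c1*c2 + a1*a3*b2*b3*c1*c2*al*be*ga + (-1)*a1*a3*b1*b2*c2*c3*al*be*ga + (-1)*a1*a3^2*c1*c2^2*al*be + (-1)*a1*a2*b2*b3*c1*c3*al*be*ga + (-1)*a1*a2*b1*b3*c2*c3 + a1*a2*b1*b3*c2*c3*al*be*ga + 3*a1*a2*a3*c1*c2*c3*al*be + 3*a1*a2*a3*b1*b2*b3*be*ga + (-1)*a1*a2*a3^2*b1*c2*be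 + (-1)*a1*a2^2*b1*b3^2*be*ga + (-1)*a1*a2^2*a3*b3*c1*be + a1^2*b2^2*c3^2 + (-1)*a1^2*a3*b2^2*b3*be*ga + a1^2*a3^2*b2*c2*be + (-1)*a1^2*a2*c2*c3^2*al*be + (-1)*a1^2*a2*a3*b2*c3*be + a1^2*a2^2*b3*c3*be) * (1 - alp*bep*gap) * (u1*u2*u3) := by
  linear_combination (a3*b3*c1*c3*u1*u3^2 + a3*b3*c1*c2*u1*u2*u3 + a3*b3*c1^2*u1^2*u3 + (-1)*a3*b1*c3^2*u1*u3^2 + (-1)*a3*b1*c2*c3*u1*u2*u3 + (-1)*a3*b1*c1*c3*u1^2*u3 + a3^2*b1*b3*be*ga*u1*u3^2 + a3^2*b1*b2*be*ga*u1*u2*u3 + a3^2*b1^2*be*ga*u1^2*u3 + (-1)*a3^3*c1*be*u1*u3^2 + a2*b3*c1*c3*u1*u2*u3 + a2*b3*c1*c2*u1*u2^2 + a2*b3*c1^2*u1^2*u2 + (-1)*a2*b1*c3^2*u1*u2*u3 + (-1)*a2*b1*c2*c3*u1*u2^2 + (-1)*a2*b1*c1*c3*u1^2*u2 + a2*a3*b1*b3*be*ga*u1*u2*u3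 + a2*a3*b1*b2*be*ga*u1*u2^2 + a2*a3*b1^2*be*ga*u1^2*u2 + (-2)*a2*a3^2*c1*be*u1*u2*u3 + (-1)*a2^2*a3*c1*be*u1*u2^2 + a1*b3*c1*c3*u1^2*u3 + a1*b3*c1*c2*u1^2*u2 + a1*b3*c1^2*u1^3 + (-1)*a1*b1*c3^2*u1^2*u3 + (-1)*a1*b1*c2*c3*u1^2*u2 + (-1)*a1*b1*c1*c3*u1^3 + (-1)*a1*a3*b3^2*be*ga*u1*u3^2 + (-1)*a1*a3*b2*b3*be*ga*u1*u2*u3 + a1*a3*b1*b2*be*ga*u1^2*u2 + a1*a3*b1^2*be*ga*u1^3 + a1*a3^2*c3*be*u1*u3^2 + (-2)*a1*a3^2*c1*be*u1^2*u3 + (-1)*a1*a2*b3^2*be*ga*u1*u2*u3 + (-1)*a1*a2*b2*b3*be*ga*u1*u2^2 + (-1)*a1*a2*b1*b3*be*ga*u1^2*u2 + 2*a1*a2*a3*c3*be*u1*u2*u3 + (-2)*a1*a2*a3*c1*be*u1^2*u2 + a1*a2^2*c3*be*u1*u2^2 + (-1)*a1^2*b3^2*be*ga*u1^2*u3 + (-1)*a1^2*b2*b3*be*ga*u1^2*u2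 + (-1)*a1^2*b1*b3*be*ga*u1^3 + 2*a1^2*a3*c3*be*u1^2*u3 + (-1)*a1^2*a3*c1*be*u1^3 + 2*a1^2*a2*c3*be*u1^2*u2 + a1^3*c3*be*u1^3) * he0 + ((-1)*a3*b2*c1*c3*u2*u3^2 + (-1)*a3*b2*c1*c2*u2^2*u3 + (-1)*a3*b2*c1^2*u1*u2*u3 + a3*b1*c2*c3*u2*u3^2 + a3*b1*c2^2*u2^2*u3 + a3*b1*c1*c2*u1*u2*u3 + (-1)*a2*b2*c1*c3*u2^2*u3 + (-1)*a2*b2*c1*c2*u2^3 + (-1)*a2*b2*c1^2*u1*u2^2 + a2*b1*c2*c3*u2^2*u3 + a2*b1*c2^2*u2^3 + a2*b1*c1*c2*u1*u2^2 + (-1)*a2*a3*b1*b3*be*ga*u2*u3^2 + (-1)*a2*a3*b1*b2*be*ga*u2^2*u3 + (-1)*a2*a3*b1^2*be*ga*u1*u2*u3 + a2*a3^2*c1*be*u2*u3^2 + (-1)*a2^2*b1*b3*be*ga*u2^2*u3 + (-1)*a2^2*b1*b2*be*ga*u2^3 + (-1)*a2^2*b1^2*be*ga*u1*u2^2 + 2*a2^2*a3*c1*be*u2^2*u3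 + a2^3*c1*be*u2^3 + (-1)*a1*b2*c1*c3*u1*u2*u3 + (-1)*a1*b2*c1*c2*u1*u2^2 + (-1)*a1*b2*c1^2*u1^2*u2 + a1*b1*c2*c3*u1*u2*u3 + a1*b1*c2^2*u1*u2^2 + a1*b1*c1*c2*u1^2*u2 + a1*a3*b2*b3*be*ga*u2*u3^2 + a1*a3*b2^2*be*ga*u2^2*u3 + a1*a3*b1*b2*be*ga*u1*u2*u3 + (-1)*a1*a3^2*c2*be*u2*u3^2 + a1*a2*b2*b3*be*ga*u2^2*u3 + a1*a2*b2^2*be*ga*u2^3 + (-1)*a1*a2*b1*b3*be*ga*u1*u2*u3 + (-1)*a1*a2*b1^2*be*ga*u1^2*u2 + (-2)*a1*a2*a3*c2*be*u2^2*u3 + 2*a1*a2*a3*c1*be*u1*u2*u3 + (-1)*a1*a2^2*c2*be*u2^3 + 2*a1*a2^2*c1*be*u1*u2^2 + a1^2*b2*b3*be*ga*u1*u2*u3 + a1^2*b2^2*be*ga*u1*u2^2 + a1^2*b1*b2*be*ga*u1^2*u2 + (-2)*a1^2*a3*c2*be*u1*u2*u3 + (-2)*a1^2*a2*c2*be*u1*u2^2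 + a1^2*a2*c1*be*u1^2*u2 + (-1)*a1^3*c2*be*u1^2*u2) * he1 + ((-1)*a3*b3*c2*c3*u3^3 + (-1)*a3*b3*c2^2*u2*u3^2 + (-1)*a3*b3*c1*c2*u1*u3^2 + a3*b2*c3^2*u3^3 + a3*b2*c2*c3*u2*u3^2 + a3*b2*c1*c3*u1*u3^2 + (-1)*a3^2*b2*b3*be*ga*u3^3 + (-1)*a3^2*b2^2*be*ga*u2*u3^2 + (-1)*a3^2*b1*b2*be*ga*u1*u3^2 + a3^3*c2*be*u3^3 + (-1)*a2*b3*c2*c3*u2*u3^2 + (-1)*a2*b3*c2^2*u2^2*u3 + (-1)*a2*b3*c1*c2*u1*u2*u3 + a2*b2*c3^2*u2*u3^2 + a2*b2*c2*c3*u2^2*u3 + a2*b2*c1*c3*u1*u2*u3 + a2*a3*b3^2*be*ga*u3^3 + (-1)*a2*a3*b2^2*be*ga*u2^2*u3 + a2*a3*b1*b3*be*ga*u1*u3^2 + (-1)*a2*a3*b1*b2*be*ga*u1*u2*u3 + (-1)*a2*a3^2*c3*be*u3^3 + 2*a2*a3^2*c2*be*u2*u3^2 + a2^2*b3^2*be*ga*u2*u3^2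 + a2^2*b2*b3*be*ga*u2^2*u3 + a2^2*b1*b3*be*ga*u1*u2*u3 + (-2)*a2^2*a3*c3*be*u2*u3^2 + a2^2*a3*c2*be*u2^2*u3 + (-1)*a2^3*c3*be*u2^2*u3 + (-1)*a1*b3*c2*c3*u1*u3^2 + (-1)*a1*b3*c2^2*u1*u2*u3 + (-1)*a1*b3*c1*c2*u1^2*u3 + a1*b2*c3^2*u1*u3^2 + a1*b2*c2*c3*u1*u2*u3 + a1*b2*c1*c3*u1^2*u3 + (-1)*a1*a3*b2*b3*be*ga*u1*u3^2 + (-1)*a1*a3*b2^2*be*ga*u1*u2*u3 + (-1)*a1*a3*b1*b2*be*ga*u1^2*u3 + 2*a1*a3^2*c2*be*u1*u3^2 + a1*a2*b3^2*be*ga*u1*u3^2 + a1*a2*b2*b3*be*ga*u1*u2*u3 + a1*a2*b1*b3*be*ga*u1^2*u3 + (-2)*a1*a2*a3*c3*be*u1*u3^2 + 2*a1*a2*a3*c2*be*u1*u2*u3 + (-2)*a1*a2^2*c3*be*u1*u2*u3 + a1^2*a3*c2*be*u1^2*u3 + (-1)*a1^2*a2*c3*be*u1^2*u3) * he2 + ((-1)*a3*b2*c1*c3*u3^3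 + (-1)*a3*b2*c1*c2*u2*u3^2 + (-1)*a3*b2*c1^2*u1*u3^2 + a3*b1*c2*c3*u3^3 + a3*b1*c2^2*u2*u3^2 + a3*b1*c1*c2*u1*u3^2 + (-1)*a2*b2*c1*c3*u2*u3^2 + (-1)*a2*b2*c1*c2*u2^2*u3 + (-1)*a2*b2*c1^2*u1*u2*u3 + a2*b1*c2*c3*u2*u3^2 + a2*b1*c2^2*u2^2*u3 + a2*b1*c1*c2*u1*u2*u3 + (-1)*a2*a3*b1*b3*be*ga*u3^3 + (-1)*a2*a3*b1*b2*be*ga*u2*u3^2 + (-1)*a2*a3*b1^2*be*ga*u1*u3^2 + a2*a3^2*c1*be*u3^3 + (-1)*a2^2*b1*b3*be*ga*u2*u3^2 + (-1)*a2^2*b1*b2*be*ga*u2^2*u3 + (-1)*a2^2*b1^2*be*ga*u1*u2*u3 + 2*a2^2*a3*c1*be*u2*u3^2 + a2^3*c1*be*u2^2*u3 + (-1)*a1*b2*c1*c3*u1*u3^2 + (-1)*a1*b2*c1*c2*u1*u2*u3 + (-1)*a1*b2*c1^2*u1^2*u3 + a1*b1*c2*c3*u1*u3^2 + a1*b1*c2^2*u1*u2*u3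 + a1*b1*c1*c2*u1^2*u3 + a1*a3*b2*b3*be*ga*u3^3 + a1*a3*b2^2*be*ga*u2*u3^2 + a1*a3*b1*b2*be*ga*u1*u3^2 + (-1)*a1*a3^2*c2*be*u3^3 + a1*a2*b2*b3*be*ga*u2*u3^2 + a1*a2*b2^2*be*ga*u2^2*u3 + (-1)*a1*a2*b1*b3*be*ga*u1*u3^2 + (-1)*a1*a2*b1^2*be*ga*u1^2*u3 + (-2)*a1*a2*a3*c2*be*u2*u3^2 + 2*a1*a2*a3*c1*be*u1*u3^2 + (-1)*a1*a2^2*c2*be*u2^2*u3 + 2*a1*a2^2*c1*be*u1*u2*u3 + a1^2*b2*b3*be*ga*u1*u3^2 + a1^2*b2^2*be*ga*u1*u2*u3 + a1^2*b1*b2*be*ga*u1^2*u3 + (-2)*a1^2*a3*c2*be*u1*u3^2 + (-2)*a1^2*a2*c2*be*u1*u2*u3 + a1^2*a2*c1*be*u1^2*u3 + (-1)*a1^3*c2*be*u1^2*u3) * he3 + ((-1)*a3*b3*c2*c3*u1*u3^2 + (-1)*a3*b3*c2^2*u1*u2*u3 + (-1)*a3*b3*c1*c2*u1^2*u3 + a3*b2*c3^2*u1*u3^2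 + a3*b2*c2*c3*u1*u2*u3 + a3*b2*c1*c3*u1^2*u3 + (-1)*a3^2*b2*b3*be*ga*u1*u3^2 + (-1)*a3^2*b2^2*be*ga*u1*u2*u3 + (-1)*a3^2*b1*b2*be*ga*u1^2*u3 + a3^3*c2*be*u1*u3^2 + (-1)*a2*b3*c2*c3*u1*u2*u3 + (-1)*a2*b3*c2^2*u1*u2^2 + (-1)*a2*b3*c1*c2*u1^2*u2 + a2*b2*c3^2*u1*u2*u3 + a2*b2*c2*c3*u1*u2^2 + a2*b2*c1*c3*u1^2*u2 + a2*a3*b3^2*be*ga*u1*u3^2 + (-1)*a2*a3*b2^2*be*ga*u1*u2^2 + a2*a3*b1*b3*be*ga*u1^2*u3 + (-1)*a2*a3*b1*b2*be*ga*u1^2*u2 + (-1)*a2*a3^2*c3*be*u1*u3^2 + 2*a2*a3^2*c2*be*u1*u2*u3 + a2^2*b3^2*be*ga*u1*u2*u3 + a2^2*b2*b3*be*ga*u1*u2^2 + a2^2*b1*b3*be*ga*u1^2*u2 + (-2)*a2^2*a3*c3*be*u1*u2*u3 + a2^2*a3*c2*be*u1*u2^2 + (-1)*a2^3*c3*be*u1*u2^2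 + (-1)*a1*b3*c2*c3*u1^2*u3 + (-1)*a1*b3*c2^2*u1^2*u2 + (-1)*a1*b3*c1*c2*u1^3 + a1*b2*c3^2*u1^2*u3 + a1*b2*c2*c3*u1^2*u2 + a1*b2*c1*c3*u1^3 + (-1)*a1*a3*b2*b3*be*ga*u1^2*u3 + (-1)*a1*a3*b2^2*be*ga*u1^2*u2 + (-1)*a1*a3*b1*b2*be*ga*u1^3 + 2*a1*a3^2*c2*be*u1^2*u3 + a1*a2*b3^2*be*ga*u1^2*u3 + a1*a2*b2*b3*be*ga*u1^2*u2 + a1*a2*b1*b3*be*ga*u1^3 + (-2)*a1*a2*a3*c3*be*u1^2*u3 + 2*a1*a2*a3*c2*be*u1^2*u2 + (-2)*a1*a2^2*c3*be*u1^2*u2 + a1^2*a3*c2*be*u1^3 + (-1)*a1^2*a2*c3*be*u1^3) * he4 + (a3*b3*c1*c3*u2*u3^2 + a3*b3*c1*c2*u2^2*u3 + a3*b3*c1^2*u1*u2*u3 + (-1)*a3*b1*c3^2*u2*u3^2 + (-1)*a3*b1*c2*c3*u2^2*u3 + (-1)*a3*b1*c1*c3*u1*u2*u3 + a3^2*b1*b3*be*ga*u2*u3^2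 + a3^2*b1*b2*be*ga*u2^2*u3 + a3^2*b1^2*be*ga*u1*u2*u3 + (-1)*a3^3*c1*be*u2*u3^2 + a2*b3*c1*c3*u2^2*u3 + a2*b3*c1*c2*u2^3 + a2*b3*c1^2*u1*u2^2 + (-1)*a2*b1*c3^2*u2^2*u3 + (-1)*a2*b1*c2*c3*u2^3 + (-1)*a2*b1*c1*c3*u1*u2^2 + a2*a3*b1*b3*be*ga*u2^2*u3 + a2*a3*b1*b2*be*ga*u2^3 + a2*a3*b1^2*be*ga*u1*u2^2 + (-2)*a2*a3^2*c1*be*u2^2*u3 + (-1)*a2^2*a3*c1*be*u2^3 + a1*b3*c1*c3*u1*u2*u3 + a1*b3*c1*c2*u1*u2^2 + a1*b3*c1^2*u1^2*u2 + (-1)*a1*b1*c3^2*u1*u2*u3 + (-1)*a1*b1*c2*c3*u1*u2^2 + (-1)*a1*b1*c1*c3*u1^2*u2 + (-1)*a1*a3*b3^2*be*ga*u2*u3^2 + (-1)*a1*a3*b2*b3*be*ga*u2^2*u3 + a1*a3*b1*b2*be*ga*u1*u2^2 + a1*a3*b1^2*be*ga*u1^2*u2 + a1*a3^2*c3*be*u2*u3^2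 + (-2)*a1*a3^2*c1*be*u1*u2*u3 + (-1)*a1*a2*b3^2*be*ga*u2^2*u3 + (-1)*a1*a2*b2*b3*be*ga*u2^3 + (-1)*a1*a2*b1*b3*be*ga*u1*u2^2 + 2*a1*a2*a3*c3*be*u2^2*u3 + (-2)*a1*a2*a3*c1*be*u1*u2^2 + a1*a2^2*c3*be*u2^3 + (-1)*a1^2*b3^2*be*ga*u1*u2*u3 + (-1)*a1^2*b2*b3*be*ga*u1*u2^2 + (-1)*a1^2*b1*b3*be*ga*u1^2*u2 + 2*a1^2*a3*c3*be*u1*u2*u3 + (-1)*a1^2*a3*c1*be*u1^2*u2 + 2*a1^2*a2*c3*be*u1*u2^2 + a1^3*c3*be*u1^2*u2) * he5 + ((-1)*b3^2*c2*c3*al*ga*bep*u1^2*u3 + b3^2*c1*c2*al*ga*u1*u2*u3 + (-1)*b2*b3*c2*c3*al*ga*bep*u1^2*u2 + b2*b3*c1*c2*al*ga*u1*u2^2 + (-1)*b1*b3*c2*c3*al*ga*bep*u1^3 + (-1)*b1*b3*c1*c3*al*ga*u1^2*u3 + b1*b3*c1*c2*al*ga*u1^2*u2 + b1*b3*c1*c2*al*ga*alp*u1*u3^2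 + (-1)*b1*b2*c1*c3*al*ga*u1^2*u2 + b1*b2*c1*c2*al*ga*alp*u1*u2*u3 + (-1)*b1^2*c1*c3*al*ga*u1^3 + b1^2*c1*c2*al*ga*alp*u1^2*u3 + a3*c2*c3^2*al*bep*u1^2*u3 + (-1)*a3*c1*c2*c3*al*u1*u2*u3 + a3*c1^2*c3*al*u1^2*u3 + (-1)*a3*c1^2*c2*al*alp*u1*u3^2 + a3*b1^2*b3*ga*u1^2*u3 + a3*b1^2*b2*ga*u1^2*u2 + a3*b1^3*ga*u1^3 + (-1)*a3^2*b1*c1*u1^2*u3 + a2*c2*c3^2*al*bep*u1^2*u2 + (-1)*a2*c1*c2*c3*al*u1*u2^2 + a2*c1^2*c3*al*u1^2*u2 + (-1)*a2*c1^2*c2*al*alp*u1*u2*u3 + a2*b3^3*ga*bep*u1^2*u3 + a2*b2*b3^2*ga*bep*u1^2*u2 + a2*b1*b3^2*ga*bep*u1^3 + (-1)*a2*a3*b3*c3*bep*u1^2*u3 + (-1)*a2*a3*b1*c1*u1^2*u2 + (-1)*a2^2*b3*c3*bep*u1^2*u2 + a1*c2*c3^2*al*bep*u1^3 + (-1)*a1*c1*c2*c3*al*u1^2*u2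 + a1*c1^2*c3*al*u1^3 + (-1)*a1*c1^2*c2*al*alp*u1^2*u3 + (-1)*a1*b2*b3^2*ga*u1*u2*u3 + (-1)*a1*b2^2*b3*ga*u1*u2^2 + (-1)*a1*b1*b2*b3*ga*u1^2*u2 + (-1)*a1*b1*b2*b3*ga*alp*u1*u3^2 + (-1)*a1*b1*b2^2*ga*alp*u1*u2*u3 + (-1)*a1*b1^2*b2*ga*alp*u1^2*u3 + a1*a3*b2*c3*u1*u2*u3 + a1*a3*b2*c1*alp*u1*u3^2 + (-1)*a1*a3*b1*c1*u1^3 + (-1)*a1*a2*b3*c3*bep*u1^3 + a1*a2*b2*c3*u1*u2^2 + a1*a2*b2*c1*alp*u1*u2*u3 + a1^2*b2*c3*u1^2*u2 + a1^2*b2*c1*alp*u1^2*u3) * he6 + (b2*b3*c2*c3*al*ga*bep*u1*u2*u3 + (-1)*b2*b3*c1*c2*al*ga*u2^2*u3 + b2^2*c2*c3*al*ga*bep*u1*u2^2 + (-1)*b2^2*c1*c2*al*ga*u2^3 + b1*b3*c2*c3*al*ga*u2*u3^2 + (-1)*b1*b3*c1*c3*al*ga*gap*u2^2*u3 + b1*b2*c2*c3*al*ga*u2^2*u3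 + b1*b2*c2*c3*al*ga*bep*u1^2*u2 + (-1)*b1*b2*c1*c3*al*ga*gap*u2^3 + (-1)*b1*b2*c1*c2*al*ga*u1*u2^2 + b1^2*c2*c3*al*ga*u1*u2*u3 + (-1)*b1^2*c1*c3*al*ga*gap*u1*u2^2 + (-1)*a3*c2^2*c3*al*bep*u1*u2*u3 + (-1)*a3*c1*c2*c3*al*u2*u3^2 + a3*c1*c2^2*al*u2^2*u3 + a3*c1^2*c3*al*gap*u2^2*u3 + a3*b1^2*b3*ga*gap*u2^2*u3 + a3*b1^2*b2*ga*gap*u2^3 + a3*b1^3*ga*gap*u1*u2^2 + (-1)*a3^2*b1*c1*gap*u2^2*u3 + (-1)*a2*c2^2*c3*al*bep*u1*u2^2 + (-1)*a2*c1*c2*c3*al*u2^2*u3 + a2*c1*c2^2*al*u2^3 + a2*c1^2*c3*al*gap*u2^3 + (-1)*a2*b2*b3^2*ga*bep*u1*u2*u3 + (-1)*a2*b2^2*b3*ga*bep*u1*u2^2 + (-1)*a2*b1*b3^2*ga*u2*u3^2 + (-1)*a2*b1*b2*b3*ga*u2^2*u3 + (-1)*a2*b1*b2*b3*ga*bep*u1^2*u2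 + (-1)*a2*b1^2*b3*ga*u1*u2*u3 + a2*a3*b3*c2*bep*u1*u2*u3 + a2*a3*b3*c1*u2*u3^2 + (-1)*a2*a3*b1*c1*gap*u2^3 + a2^2*b3*c2*bep*u1*u2^2 + a2^2*b3*c1*u2^2*u3 + (-1)*a1*c2^2*c3*al*bep*u1^2*u2 + (-1)*a1*c1*c2*c3*al*u1*u2*u3 + a1*c1*c2^2*al*u1*u2^2 + a1*c1^2*c3*al*gap*u1*u2^2 + a1*b2^2*b3*ga*u2^2*u3 + a1*b2^3*ga*u2^3 + a1*b1*b2^2*ga*u1*u2^2 + (-1)*a1*a3*b2*c2*u2^2*u3 + (-1)*a1*a3*b1*c1*gap*u1*u2^2 + a1*a2*b3*c2*bep*u1^2*u2 + a1*a2*b3*c1*u1*u2*u3 + (-1)*a1*a2*b2*c2*u2^3 + (-1)*a1^2*b2*c2*u1*u2^2) * he7 + ((-1)*b3^2*c2*c3*al*ga*u3^3 + b3^2*c1*c3*al*ga*gap*u2*u3^2 + (-1)*b2*b3*c2*c3*al*ga*u2*u3^2 + b2*b3*c1*c3*al*ga*u1*u3^2 + b2*b3*c1*c3*al*ga*gap*u2^2*u3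 + (-1)*b2*b3*c1*c2*al*ga*alp*u3^3 + b2^2*c1*c3*al*ga*u1*u2*u3 + (-1)*b2^2*c1*c2*al*ga*alp*u2*u3^2 + (-1)*b1*b3*c2*c3*al*ga*u1*u3^2 + b1*b3*c1*c3*al*ga*gap*u1*u2*u3 + b1*b2*c1*c3*al*ga*u1^2*u3 + (-1)*b1*b2*c1*c2*al*ga*alp*u1*u3^2 + a3*c2*c3^2*al*u3^3 + (-1)*a3*c1*c3^2*al*gap*u2*u3^2 + (-1)*a3*c1*c2*c3*al*u1*u3^2 + a3*c1*c2^2*al*alp*u3^3 + (-1)*a3*b1*b3^2*ga*gap*u2*u3^2 + (-1)*a3*b1*b2*b3*ga*u1*u3^2 + (-1)*a3*b1*b2*b3*ga*gap*u2^2*u3 + (-1)*a3*b1*b2^2*ga*u1*u2*u3 + (-1)*a3*b1^2*b3*ga*gap*u1*u2*u3 + (-1)*a3*b1^2*b2*ga*u1^2*u3 + a3^2*b1*c3*gap*u2*u3^2 + a3^2*b1*c2*u1*u3^2 + a2*c2*c3^2*al*u2*u3^2 + (-1)*a2*c1*c3^2*al*gap*u2^2*u3 + (-1)*a2*c1*c2*c3*al*u1*u2*u3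 + a2*c1*c2^2*al*alp*u2*u3^2 + a2*b3^3*ga*u3^3 + a2*b2*b3^2*ga*u2*u3^2 + a2*b1*b3^2*ga*u1*u3^2 + (-1)*a2*a3*b3*c3*u3^3 + a2*a3*b1*c3*gap*u2^2*u3 + a2*a3*b1*c2*u1*u2*u3 + (-1)*a2^2*b3*c3*u2*u3^2 + a1*c2*c3^2*al*u1*u3^2 + (-1)*a1*c1*c3^2*al*gap*u1*u2*u3 + (-1)*a1*c1*c2*c3*al*u1^2*u3 + a1*c1*c2^2*al*alp*u1*u3^2 + a1*b2^2*b3*ga*alp*u3^3 + a1*b2^3*ga*alp*u2*u3^2 + a1*b1*b2^2*ga*alp*u1*u3^2 + (-1)*a1*a3*b2*c2*alp*u3^3 + a1*a3*b1*c3*gap*u1*u2*u3 + a1*a3*b1*c2*u1^2*u3 + (-1)*a1*a2*b3*c3*u1*u3^2 + (-1)*a1*a2*b2*c2*alp*u2*u3^2 + (-1)*a1^2*b2*c2*alp*u1*u3^2) * he8 + (b2*b3*c2*c3*al*ga*bep*u1*u3^2 + (-1)*b2*b3*c1*c2*al*ga*u2*u3^2 + b2^2*c2*c3*al*ga*bep*u1*u2*u3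 + (-1)*b2^2*c1*c2*al*ga*u2^2*u3 + b1*b3*c2*c3*al*ga*u3^3 + (-1)*b1*b3*c1*c3*al*ga*gap*u2*u3^2 + b1*b2*c2*c3*al*ga*u2*u3^2 + b1*b2*c2*c3*al*ga*bep*u1^2*u3 + (-1)*b1*b2*c1*c3*al*ga*gap*u2^2*u3 + (-1)*b1*b2*c1*c2*al*ga*u1*u2*u3 + b1^2*c2*c3*al*ga*u1*u3^2 + (-1)*b1^2*c1*c3*al*ga*gap*u1*u2*u3 + (-1)*a3*c2^2*c3*al*bep*u1*u3^2 + (-1)*a3*c1*c2*c3*al*u3^3 + a3*c1*c2^2*al*u2*u3^2 + a3*c1^2*c3*al*gap*u2*u3^2 + a3*b1^2*b3*ga*gap*u2*u3^2 + a3*b1^2*b2*ga*gap*u2^2*u3 + a3*b1^3*ga*gap*u1*u2*u3 + (-1)*a3^2*b1*c1*gap*u2*u3^2 + (-1)*a2*c2^2*c3*al*bep*u1*u2*u3 + (-1)*a2*c1*c2*c3*al*u2*u3^2 + a2*c1*c2^2*al*u2^2*u3 + a2*c1^2*c3*al*gap*u2^2*u3 + (-1)*a2*b2*b3^2*ga*bep*u1*u3^2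 + (-1)*a2*b2^2*b3*ga*bep*u1*u2*u3 + (-1)*a2*b1*b3^2*ga*u3^3 + (-1)*a2*b1*b2*b3*ga*u2*u3^2 + (-1)*a2*b1*b2*b3*ga*bep*u1^2*u3 + (-1)*a2*b1^2*b3*ga*u1*u3^2 + a2*a3*b3*c2*bep*u1*u3^2 + a2*a3*b3*c1*u3^3 + (-1)*a2*a3*b1*c1*gap*u2^2*u3 + a2^2*b3*c2*bep*u1*u2*u3 + a2^2*b3*c1*u2*u3^2 + (-1)*a1*c2^2*c3*al*bep*u1^2*u3 + (-1)*a1*c1*c2*c3*al*u1*u3^2 + a1*c1*c2^2*al*u1*u2*u3 + a1*c1^2*c3*al*gap*u1*u2*u3 + a1*b2^2*b3*ga*u2*u3^2 + a1*b2^3*ga*u2^2*u3 + a1*b1*b2^2*ga*u1*u2*u3 + (-1)*a1*a3*b2*c2*u2*u3^2 + (-1)*a1*a3*b1*c1*gap*u1*u2*u3 + a1*a2*b3*c2*bep*u1^2*u3 + a1*a2*b3*c1*u1*u3^2 + (-1)*a1*a2*b2*c2*u2^2*u3 + (-1)*a1^2*b2*c2*u1*u2*u3) * he9 + ((-1)*b3^2*c2*c3*al*ga*u1*u3^2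 + b3^2*c1*c3*al*ga*gap*u1*u2*u3 + (-1)*b2*b3*c2*c3*al*ga*u1*u2*u3 + b2*b3*c1*c3*al*ga*u1^2*u3 + b2*b3*c1*c3*al*ga*gap*u1*u2^2 + (-1)*b2*b3*c1*c2*al*ga*alp*u1*u3^2 + b2^2*c1*c3*al*ga*u1^2*u2 + (-1)*b2^2*c1*c2*al*ga*alp*u1*u2*u3 + (-1)*b1*b3*c2*c3*al*ga*u1^2*u3 + b1*b3*c1*c3*al*ga*gap*u1^2*u2 + b1*b2*c1*c3*al*ga*u1^3 + (-1)*b1*b2*c1*c2*al*ga*alp*u1^2*u3 + a3*c2*c3^2*al*u1*u3^2 + (-1)*a3*c1*c3^2*al*gap*u1*u2*u3 + (-1)*a3*c1*c2*c3*al*u1^2*u3 + a3*c1*c2^2*al*alp*u1*u3^2 + (-1)*a3*b1*b3^2*ga*gap*u1*u2*u3 + (-1)*a3*b1*b2*b3*ga*u1^2*u3 + (-1)*a3*b1*b2*b3*ga*gap*u1*u2^2 + (-1)*a3*b1*b2^2*ga*u1^2*u2 + (-1)*a3*b1^2*b3*ga*gap*u1^2*u2 + (-1)*a3*b1^2*b2*ga*u1^3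 + a3^2*b1*c3*gap*u1*u2*u3 + a3^2*b1*c2*u1^2*u3 + a2*c2*c3^2*al*u1*u2*u3 + (-1)*a2*c1*c3^2*al*gap*u1*u2^2 + (-1)*a2*c1*c2*c3*al*u1^2*u2 + a2*c1*c2^2*al*alp*u1*u2*u3 + a2*b3^3*ga*u1*u3^2 + a2*b2*b3^2*ga*u1*u2*u3 + a2*b1*b3^2*ga*u1^2*u3 + (-1)*a2*a3*b3*c3*u1*u3^2 + a2*a3*b1*c3*gap*u1*u2^2 + a2*a3*b1*c2*u1^2*u2 + (-1)*a2^2*b3*c3*u1*u2*u3 + a1*c2*c3^2*al*u1^2*u3 + (-1)*a1*c1*c3^2*al*gap*u1^2*u2 + (-1)*a1*c1*c2*c3*al*u1^3 + a1*c1*c2^2*al*alp*u1^2*u3 + a1*b2^2*b3*ga*alp*u1*u3^2 + a1*b2^3*ga*alp*u1*u2*u3 + a1*b1*b2^2*ga*alp*u1^2*u3 + (-1)*a1*a3*b2*c2*alp*u1*u3^2 + a1*a3*b1*c3*gap*u1^2*u2 + a1*a3*b1*c2*u1^3 + (-1)*a1*a2*b3*c3*u1^2*u3 + (-1)*a1*a2*b2*c2*alp*u1*u2*u3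 + (-1)*a1^2*b2*c2*alp*u1^2*u3) * he10 + ((-1)*b3^2*c2*c3*al*ga*bep*u1*u2*u3 + b3^2*c1*c2*al*ga*u2^2*u3 + (-1)*b2*b3*c2*c3*al*ga*bep*u1*u2^2 + b2*b3*c1*c2*al*ga*u2^3 + (-1)*b1*b3*c2*c3*al*ga*bep*u1^2*u2 + (-1)*b1*b3*c1*c3*al*ga*u1*u2*u3 + b1*b3*c1*c2*al*ga*u1*u2^2 + b1*b3*c1*c2*al*ga*alp*u2*u3^2 + (-1)*b1*b2*c1*c3*al*ga*u1*u2^2 + b1*b2*c1*c2*al*ga*alp*u2^2*u3 + (-1)*b1^2*c1*c3*al*ga*u1^2*u2 + b1^2*c1*c2*al*ga*alp*u1*u2*u3 + a3*c2*c3^2*al*bep*u1*u2*u3 + (-1)*a3*c1*c2*c3*al*u2^2*u3 + a3*c1^2*c3*al*u1*u2*u3 + (-1)*a3*c1^2*c2*al*alp*u2*u3^2 + a3*b1^2*b3*ga*u1*u2*u3 + a3*b1^2*b2*ga*u1*u2^2 + a3*b1^3*ga*u1^2*u2 + (-1)*a3^2*b1*c1*u1*u2*u3 + a2*c2*c3^2*al*bep*u1*u2^2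 + (-1)*a2*c1*c2*c3*al*u2^3 + a2*c1^2*c3*al*u1*u2^2 + (-1)*a2*c1^2*c2*al*alp*u2^2*u3 + a2*b3^3*ga*bep*u1*u2*u3 + a2*b2*b3^2*ga*bep*u1*u2^2 + a2*b1*b3^2*ga*bep*u1^2*u2 + (-1)*a2*a3*b3*c3*bep*u1*u2*u3 + (-1)*a2*a3*b1*c1*u1*u2^2 + (-1)*a2^2*b3*c3*bep*u1*u2^2 + a1*c2*c3^2*al*bep*u1^2*u2 + (-1)*a1*c1*c2*c3*al*u1*u2^2 + a1*c1^2*c3*al*u1^2*u2 + (-1)*a1*c1^2*c2*al*alp*u1*u2*u3 + (-1)*a1*b2*b3^2*ga*u2^2*u3 + (-1)*a1*b2^2*b3*ga*u2^3 + (-1)*a1*b1*b2*b3*ga*u1*u2^2 + (-1)*a1*b1*b2*b3*ga*alp*u2*u3^2 + (-1)*a1*b1*b2^2*ga*alp*u2^2*u3 + (-1)*a1*b1^2*b2*ga*alp*u1*u2*u3 + a1*a3*b2*c3*u2^2*u3 + a1*a3*b2*c1*alp*u2*u3^2 + (-1)*a1*a3*b1*c1*u1^2*u2 + (-1)*a1*a2*b3*c3*bep*u1^2*u2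 + a1*a2*b2*c3*u2^3 + a1*a2*b2*c1*alp*u2^2*u3 + a1^2*b2*c3*u1*u2^2 + a1^2*b2*c1*alp*u1*u2*u3) * he11 + ((-1)*b3*c1*c2*c3*al*bep*u1^3 + b3*c1^2*c2*al*u1^2*u2 + b2*c1*c3^2*al*bep*u1^3 + (-1)*b2*c1*c2*c3*al*alp*bep*u1^2*u3 + b1*c2^2*c3*al*alp*bep*u1^2*u3 + (-1)*b1*c1*c2*c3*al*u1^2*u2 + (-1)*a3*b1*b2*c3*bep*u1^3 + a3*b1^2*c2*u1^2*u2 + a2*b3^2*c1*bep*u1^3 + (-1)*a2*b1*b3*c2*alp*bep*u1^2*u3 + (-1)*a2*a3*c1*c3*al*be*bep*u1^3 + a2*a3*c1*c2*al*be*alp*bep*u1^2*u3 + a2*a3^2*b1*be*bep*u1^3 + (-1)*a1*b2*b3*c1*u1^2*u2 + a1*b2^2*c3*alp*bep*u1^2*u3 + a1*a3*c2*c3*al*be*bep*u1^3 + (-1)*a1*a3*c1*c2*al*be*u1^2*u2 + (-1)*a1*a2*c2*c3*al*be*alp*bep*u1^2*u3 + a1*a2*c1*c3*al*be*u1^2*u2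 + (-1)*a1*a2*a3*b3*be*bep*u1^3 + (-1)*a1*a2*a3*b2*be*alp*bep*u1^2*u3 + (-1)*a1*a2*a3*b1*be*u1^2*u2 + a1*a2^2*b3*be*alp*bep*u1^2*u3 + a1^2*a3*b2*be*u1^2*u2) * he12 + ((-1)*b3*c1*c2*c3*al*bep*gap*u1*u2^2 + b3*c1^2*c2*al*gap*u2^3 + b2*c1*c3^2*al*bep*gap*u1*u2^2 + (-1)*b2*c1*c2*c3*al*u2^2*u3 + b1*c2^2*c3*al*u2^2*u3 + (-1)*b1*c1*c2*c3*al*gap*u2^3 + (-1)*a3*b1*b2*c3*bep*gap*u1*u2^2 + a3*b1^2*c2*gap*u2^3 + a2*b3^2*c1*bep*gap*u1*u2^2 + (-1)*a2*b1*b3*c2*u2^2*u3 + (-1)*a2*a3*c1*c3*al*be*bep*gap*u1*u2^2 + a2*a3*c1*c2*al*be*u2^2*u3 + a2*a3^2*b1*be*bep*gap*u1*u2^2 + (-1)*a1*b2*b3*c1*gap*u2^3 + a1*b2^2*c3*u2^2*u3 + a1*a3*c2*c3*al*be*bep*gap*u1*u2^2 + (-1)*a1*a3*c1*c2*al*be*gap*u2^3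 + (-1)*a1*a2*c2*c3*al*be*u2^2*u3 + a1*a2*c1*c3*al*be*gap*u2^3 + (-1)*a1*a2*a3*b3*be*bep*gap*u1*u2^2 + (-1)*a1*a2*a3*b2*be*u2^2*u3 + (-1)*a1*a2*a3*b1*be*gap*u2^3 + a1*a2^2*b3*be*u2^2*u3 + a1^2*a3*b2*be*gap*u2^3) * he13 + ((-1)*b3*c1*c2*c3*al*u1*u3^2 + b3*c1^2*c2*al*alp*gap*u2*u3^2 + b2*c1*c3^2*al*u1*u3^2 + (-1)*b2*c1*c2*c3*al*alp*u3^3 + b1*c2^2*c3*al*alp*u3^3 + (-1)*b1*c1*c2*c3*al*alp*gap*u2*u3^2 + (-1)*a3*b1*b2*c3*u1*u3^2 + a3*b1^2*c2*alp*gap*u2*u3^2 + a2*b3^2*c1*u1*u3^2 + (-1)*a2*b1*b3*c2*alp*u3^3 + (-1)*a2*a3*c1*c3*al*be*u1*u3^2 + a2*a3*c1*c2*al*be*alp*u3^3 + a2*a3^2*b1*be*u1*u3^2 + (-1)*a1*b2*b3*c1*alp*gap*u2*u3^2 + a1*b2^2*c3*alp*u3^3 + a1*a3*c2*c3*al*be*u1*u3^2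 + (-1)*a1*a3*c1*c2*al*be*alp*gap*u2*u3^2 + (-1)*a1*a2*c2*c3*al*be*alp*u3^3 + a1*a2*c1*c3*al*be*alp*gap*u2*u3^2 + (-1)*a1*a2*a3*b3*be*u1*u3^2 + (-1)*a1*a2*a3*b2*be*alp*u3^3 + (-1)*a1*a2*a3*b1*be*alp*gap*u2*u3^2 + a1*a2^2*b3*be*alp*u3^3 + a1^2*a3*b2*be*alp*gap*u2*u3^2) * he14 + ((-1)*b3*c1*c2*c3*al*bep*gap*u1*u2*u3 + b3*c1^2*c2*al*gap*u2^2*u3 + b2*c1*c3^2*al*bep*gap*u1*u2*u3 + (-1)*b2*c1*c2*c3*al*u2*u3^2 + b1*c2^2*c3*al*u2*u3^2 + (-1)*b1*c1*c2*c3*al*gap*u2^2*u3 + (-1)*a3*b1*b2*c3*bep*gap*u1*u2*u3 + a3*b1^2*c2*gap*u2^2*u3 + a2*b3^2*c1*bep*gap*u1*u2*u3 + (-1)*a2*b1*b3*c2*u2*u3^2 + (-1)*a2*a3*c1*c3*al*be*bep*gap*u1*u2*u3 + a2*a3*c1*c2*al*be*u2*u3^2 + a2*a3^2*b1*be*bep*gap*u1*u2*u3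 + (-1)*a1*b2*b3*c1*gap*u2^2*u3 + a1*b2^2*c3*u2*u3^2 + a1*a3*c2*c3*al*be*bep*gap*u1*u2*u3 + (-1)*a1*a3*c1*c2*al*be*gap*u2^2*u3 + (-1)*a1*a2*c2*c3*al*be*u2*u3^2 + a1*a2*c1*c3*al*be*gap*u2^2*u3 + (-1)*a1*a2*a3*b3*be*bep*gap*u1*u2*u3 + (-1)*a1*a2*a3*b2*be*u2*u3^2 + (-1)*a1*a2*a3*b1*be*gap*u2^2*u3 + a1*a2^2*b3*be*u2*u3^2 + a1^2*a3*b2*be*gap*u2^2*u3) * he15 + ((-1)*b3*c1*c2*c3*al*u1^2*u3 + b3*c1^2*c2*al*alp*gap*u1*u2*u3 + b2*c1*c3^2*al*u1^2*u3 + (-1)*b2*c1*c2*c3*al*alp*u1*u3^2 + b1*c2^2*c3*al*alp*u1*u3^2 + (-1)*b1*c1*c2*c3*al*alp*gap*u1*u2*u3 + (-1)*a3*b1*b2*c3*u1^2*u3 + a3*b1^2*c2*alp*gap*u1*u2*u3 + a2*b3^2*c1*u1^2*u3 + (-1)*a2*b1*b3*c2*alp*u1*u3^2 + (-1)*a2*a3*c1*c3*al*be*u1^2*u3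 + a2*a3*c1*c2*al*be*alp*u1*u3^2 + a2*a3^2*b1*be*u1^2*u3 + (-1)*a1*b2*b3*c1*alp*gap*u1*u2*u3 + a1*b2^2*c3*alp*u1*u3^2 + a1*a3*c2*c3*al*be*u1^2*u3 + (-1)*a1*a3*c1*c2*al*be*alp*gap*u1*u2*u3 + (-1)*a1*a2*c2*c3*al*be*alp*u1*u3^2 + a1*a2*c1*c3*al*be*alp*gap*u1*u2*u3 + (-1)*a1*a2*a3*b3*be*u1^2*u3 + (-1)*a1*a2*a3*b2*be*alp*u1*u3^2 + (-1)*a1*a2*a3*b1*be*alp*gap*u1*u2*u3 + a1*a2^2*b3*be*alp*u1*u3^2 + a1^2*a3*b2*be*alp*gap*u1*u2*u3) * he16 + ((-1)*b3*c1*c2*c3*al*bep*u1^2*u2 + b3*c1^2*c2*al*u1*u2^2 + b2*c1*c3^2*al*bep*u1^2*u2 + (-1)*b2*c1*c2*c3*al*alp*bep*u1*u2*u3 + b1*c2^2*c3*al*alp*bep*u1*u2*u3 + (-1)*b1*c1*c2*c3*al*u1*u2^2 + (-1)*a3*b1*b2*c3*bep*u1^2*u2 + a3*b1^2*c2*u1*u2^2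 + a2*b3^2*c1*bep*u1^2*u2 + (-1)*a2*b1*b3*c2*alp*bep*u1*u2*u3 + (-1)*a2*a3*c1*c3*al*be*bep*u1^2*u2 + a2*a3*c1*c2*al*be*alp*bep*u1*u2*u3 + a2*a3^2*b1*be*bep*u1^2*u2 + (-1)*a1*b2*b3*c1*u1*u2^2 + a1*b2^2*c3*alp*bep*u1*u2*u3 + a1*a3*c2*c3*al*be*bep*u1^2*u2 + (-1)*a1*a3*c1*c2*al*be*u1*u2^2 + (-1)*a1*a2*c2*c3*al*be*alp*bep*u1*u2*u3 + a1*a2*c1*c3*al*be*u1*u2^2 + (-1)*a1*a2*a3*b3*be*bep*u1^2*u2 + (-1)*a1*a2*a3*b2*be*alp*bep*u1*u2*u3 + (-1)*a1*a2*a3*b1*be*u1*u2^2 + a1*a2^2*b3*be*alp*bep*u1*u2*u3 + a1^2*a3*b2*be*u1*u2^2) * he17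
set_option maxHeartbeats 8000000 in
lemma forward_alg (a1 a2 a3 b1 b2 b3 c1 c2 c3 al be ga alp bep gap
    h11 h12 h13 h21 h22 h23 h31 h32 h33 : ℂ)
    (h1p : al*be*ga ≠ 1)
    (hAH11 : a1*h11 + a2*h21 + a3*h31 = 1) (hAH12 : a1*h12 + a2*h22 + a3*h32 = 0)
    (hAH13 : a1*h13 + a2*h23 + a3*h33 = 0)
    (hAH21 : b1*h11 + b2*h21 + b3*h31 = 0) (hAH22 : b1*h12 + b2*h22 + b3*h32 = 1)
    (hAH23 : b1*h13 + b2*h23 + b3*h33 = 0)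
    (hAH31 : c1*h11 + c2*h21 + c3*h31 = 0) (hAH32 : c1*h12 + c2*h22 + c3*h32 = 0)
    (hAH33 : c1*h13 + c2*h23 + c3*h33 = 1)
    (he0 : (-1)*c1*c2*al + a2*b1 = 0)
    (he1 : (-1)*c2*c3*al + a3*b2 = 0)
    (he2 : (-1)*c1*c3*al + a1*b3 = 0)
    (he3 : (-1)*c3^2*al + (-1)*c1*c2*al*alp + a3*b3 + a1*b2*alp = 0)
    (he4 : (-1)*c2*c3*al*bep + (-1)*c1^2*al + a2*b3*bep + a1*b1 = 0)
    (he5 : (-1)*c2^2*al + (-1)*c1*c3*al*gap + a3*b1*gap + a2*b2 = 0)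
    (he6 : b2*c1 + (-1)*a1*a2*be = 0)
    (he7 : b3*c2 + (-1)*a2*a3*be = 0)
    (he8 : b1*c3 + (-1)*a1*a3*be = 0)
    (he9 : b3*c3 + b1*c2*alp + (-1)*a3^2*be + (-1)*a1*a2*be*alp = 0)
    (he10 : b2*c3*bep + b1*c1 + (-1)*a2*a3*be*bep + (-1)*a1^2*be = 0)
    (he11 : b3*c1*gap + b2*c2 + (-1)*a2^2*be + (-1)*a1*a3*be*gap = 0)
    (he12 : (-1)*b1*b2*ga + a1*c2 = 0)
    (he13 : (-1)*b2*b3*ga + a2*c3 = 0)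
    (he14 : (-1)*b1*b3*ga + a3*c1 = 0)
    (he15 : (-1)*b3^2*ga + (-1)*b1*b2*ga*alp + a3*c3 + a2*c1*alp = 0)
    (he16 : (-1)*b2*b3*ga*bep + (-1)*b1^2*ga + a3*c2*bep + a1*c1 = 0)
    (he17 : (-1)*b2^2*ga + (-1)*b1*b3*ga*gap + a2*c2 + a1*c3*gap = 0)
    : alp*bep*gap = al*be*ga := by
  have hAHm : (!![a1,a2,a3;b1,b2,b3;c1,c2,c3] : Matrix (Fin 3) (Fin 3) ℂ) *
      !![h11,h12,h13;h21,h22,h23;h31,h32,h33] = 1 := by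
    ext i j
    fin_cases i <;> fin_cases j <;>
      simp [Matrix.mul_apply, Fin.sum_univ_three, Matrix.one_apply] <;>
      first
      | linear_combination hAH11 | linear_combination hAH12 | linear_combination hAH13
      | linear_combination hAH21 | linear_combination hAH22 | linear_combination hAH23
      | linear_combination hAH31 | linear_combination hAH32 | linear_combination hAH33
  have hdet : (!![a1,a2,a3;b1,b2,b3;c1,c2,c3] : Matrix (Fin 3) (Fin 3) ℂ).det *
      (!![h11,h12,h13;h21,h22,h23;h31,h32,h33] : Matrix (Fin 3) (Fin 3) ℂ).det = 1 := by
    rw [← Matrix.det_mul, hAHm, Matrix.det_one]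
  have hAdet : (!![a1,a2,a3;b1,b2,b3;c1,c2,c3] : Matrix (Fin 3) (Fin 3) ℂ).det ≠ 0 :=
    left_ne_zero_of_mul_eq_one hdet
  have hDne : ((-1)*a3*b2*c1 + a3*b1*c2 + a2*b3*c1 + (-1)*a2*b1*c3 + (-1)*a1*b3*c2 + a1*b2*c3 : ℂ) ≠ 0 := by
    intro hcon
    apply hAdet
    rw [Matrix.det_fin_three]
    simp
    linear_combination hcon
  have h1pne : (1 - al*be*ga) ≠ 0 := sub_ne_zero_of_ne (Ne.symm h1p)
  have rowne1 : ¬(a1 = 0 ∧ a2 = 0 ∧ a3 = 0) := by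
    rintro ⟨z1,z2,z3⟩; rw [z1,z2,z3] at hAH11; simp at hAH11
  have rowne2 : ¬(b1 = 0 ∧ b2 = 0 ∧ b3 = 0) := by
    rintro ⟨z1,z2,z3⟩; rw [z1,z2,z3] at hAH22; simp at hAH22
  have rowne3 : ¬(c1 = 0 ∧ c2 = 0 ∧ c3 = 0) := by
    rintro ⟨z1,z2,z3⟩; rw [z1,z2,z3] at hAH33; simp at hAH33
  have plane3 : ∀ x : ℂ, (a1 + a2*x)*(b1 + b2*x)*(c1 + c2*x) = 0 := by
    intro x
    have hk := key_identity a1 a2 a3 b1 b2 b3 c1 c2 c3 al be ga alp bep gap 1 x 0 he0 he1 he2 he3 he4 he5 he6 he7 he8 he9 he10 he11 he12 he13 he14 he15 he16 he17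
    have hk2 : (1 - al*be*ga) * ((a1 + a2*x)*(b1 + b2*x)*(c1 + c2*x)) * ((-1)*a3*b2*c1 + a3*b1*c2 + a2*b3*c1 + (-1)*a2*b1*c3 + (-1)*a1*b3*c2 + a1*b2*c3) = 0 := by linear_combination hk
    rcases mul_eq_zero.mp hk2 with h | h
    · rcases mul_eq_zero.mp h with h' | h'
      · exact absurd h' h1pne
      · exact h'
    · exact absurd h hDne

  have plane1 : ∀ x : ℂ, (a2 + a3*x)*(b2 + b3*x)*(c2 + c3*x) = 0 := by
    intro x
    have hk := key_identity a1 a2 a3 b1 b2 b3 c1 c2 c3 al be ga alp bep gap 0 1 x he0 he1 he2 he3 he4 he5 he6 he7 he8 he9 he10 he11 he12 he13 he14 he15 he16 he17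
    have hk2 : (1 - al*be*ga) * ((a2 + a3*x)*(b2 + b3*x)*(c2 + c3*x)) * ((-1)*a3*b2*c1 + a3*b1*c2 + a2*b3*c1 + (-1)*a2*b1*c3 + (-1)*a1*b3*c2 + a1*b2*c3) = 0 := by linear_combination hk
    rcases mul_eq_zero.mp hk2 with h | h
    · rcases mul_eq_zero.mp h with h' | h'
      · exact absurd h' h1pne
      · exact h'
    · exact absurd h hDne

  have plane2 : ∀ x : ℂ, (a3 + a1*x)*(b3 + b1*x)*(c3 + c1*x) = 0 := by
    intro x
    have hk := key_identity a1 a2 a3 b1 b2 b3 c1 c2 c3 al be ga alp bep gap x 0 1 he0 he1 he2 he3 he4 he5 he6 he7 he8 he9 he10 he11 he12 he13 he14 he15 he16 he17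
    have hk2 : (1 - al*be*ga) * ((a3 + a1*x)*(b3 + b1*x)*(c3 + c1*x)) * ((-1)*a3*b2*c1 + a3*b1*c2 + a2*b3*c1 + (-1)*a2*b1*c3 + (-1)*a1*b3*c2 + a1*b2*c3) = 0 := by linear_combination hk
    rcases mul_eq_zero.mp hk2 with h | h
    · rcases mul_eq_zero.mp h with h' | h'
      · exact absurd h' h1pne
      · exact h'
    · exact absurd h hDne

  have P3 := three_linear plane3
  have P1 := three_linear plane1
  have P2 := three_linear plane2
  clear plane1 plane2 plane3 hAHm hdet hAdet hDne
  rcases P3 with ⟨hz1,hz2⟩|⟨hz1,hz2⟩|⟨hz1,hz2⟩ <;>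
    rcases P1 with ⟨hz3,hz4⟩|⟨hz3,hz4⟩|⟨hz3,hz4⟩ <;>
      rcases P2 with ⟨hz5,hz6⟩|⟨hz5,hz6⟩|⟨hz5,hz6⟩
  all_goals try exact absurd ⟨by assumption, by assumption, by assumption⟩ rowne1
  all_goals try exact absurd ⟨by assumption, by assumption, by assumption⟩ rowne2
  all_goals try exact absurd ⟨by assumption, by assumption, by assumption⟩ rowne3
  · subst hz1; subst hz2; subst hz3; subst hz4; subst hz5; subst hz6
    have hs1 : a3 ≠ 0 := fun h => rowne1 ⟨rfl, rfl, h⟩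
    have hs2 : b1 ≠ 0 := fun h => rowne2 ⟨h, rfl, rfl⟩
    have hs3 : c2 ≠ 0 := fun h => rowne3 ⟨rfl, h, rfl⟩
    have key2 : (a3*b1*c2)^2 * (alp*bep*gap - al*be*ga) = 0 := by
      linear_combination (a3*b1*c2^2*alp*bep) * he5 + (a3*c2^3*al*bep) * he9 + (a3^2*c2^2*al*be) * he16
    have hnz : (a3*b1*c2)^2 ≠ 0 := pow_ne_zero _ (mul_ne_zero (mul_ne_zero hs1 hs2) hs3)
    have hzz := (mul_eq_zero.mp key2).resolve_left hnz
    linear_combination hzz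

  · subst hz1; subst hz2; subst hz3; subst hz4; subst hz5; subst hz6
    have hs1 : a3 ≠ 0 := fun h => rowne1 ⟨rfl, rfl, h⟩
    have hs2 : b2 ≠ 0 := fun h => rowne2 ⟨rfl, h, rfl⟩
    have h00 : a3*b2 = 0 := by linear_combination he1
    exact absurd h00 (mul_ne_zero hs1 hs2)

  · subst hz1; subst hz2; subst hz3; subst hz4; subst hz5; subst hz6
    have hs1 : a1 ≠ 0 := fun h => rowne1 ⟨h, rfl, rfl⟩
    have hs2 : b3 ≠ 0 := fun h => rowne2 ⟨rfl, rfl, h⟩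
    have h00 : a1*b3 = 0 := by linear_combination he2
    exact absurd h00 (mul_ne_zero hs1 hs2)

  · subst hz1; subst hz2; subst hz3; subst hz4; subst hz5; subst hz6
    have hs1 : a2 ≠ 0 := fun h => rowne1 ⟨rfl, h, rfl⟩
    have hs2 : b3 ≠ 0 := fun h => rowne2 ⟨rfl, rfl, h⟩
    have hs3 : c1 ≠ 0 := fun h => rowne3 ⟨h, rfl, rfl⟩
    have key2 : (a2*b3*c1)^2 * (alp*bep*gap - al*be*ga) = 0 := by
      linear_combination (a2*b3*c1^2*alp*gap) * he4 + (a2*c1^3*al*alp) * he11 + (a2^2*c1^2*al*be) * he15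
    have hnz : (a2*b3*c1)^2 ≠ 0 := pow_ne_zero _ (mul_ne_zero (mul_ne_zero hs1 hs2) hs3)
    have hzz := (mul_eq_zero.mp key2).resolve_left hnz
    linear_combination hzz

  · subst hz1; subst hz2; subst hz3; subst hz4; subst hz5; subst hz6
    have hs1 : a1 ≠ 0 := fun h => rowne1 ⟨h, rfl, rfl⟩
    have hs2 : b2 ≠ 0 := fun h => rowne2 ⟨rfl, h, rfl⟩
    have hs3 : c3 ≠ 0 := fun h => rowne3 ⟨rfl, rfl, h⟩
    have key2 : (a1*b2*c3)^2 * (alp*bep*gap - al*be*ga) = 0 := by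
      linear_combination (a1*b2*c3^2*bep*gap) * he3 + (a1*c3^3*al*gap) * he10 + (a1^2*c3^2*al*be) * he17
    have hnz : (a1*b2*c3)^2 ≠ 0 := pow_ne_zero _ (mul_ne_zero (mul_ne_zero hs1 hs2) hs3)
    have hzz := (mul_eq_zero.mp key2).resolve_left hnz
    linear_combination hzz

  · subst hz1; subst hz2; subst hz3; subst hz4; subst hz5; subst hz6
    have hs1 : a2 ≠ 0 := fun h => rowne1 ⟨rfl, h, rfl⟩
    have hs2 : b1 ≠ 0 := fun h => rowne2 ⟨h, rfl, rfl⟩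
    have h00 : a2*b1 = 0 := by linear_combination he0
    exact absurd h00 (mul_ne_zero hs1 hs2)


section Extraction

variable (r1 r2 r3 : ℂ)

lemma tr_vec_eq {s1 s2 s3 t1 t2 t3 : ℂ}
    (h : s1 • Xg r1 r2 r3 + s2 • Yg r1 r2 r3 + s3 • Zg r1 r2 r3
       = t1 • Xg r1 r2 r3 + t2 • Yg r1 r2 r3 + t3 • Zg r1 r2 r3) :
    s1 = t1 ∧ s2 = t2 ∧ s3 = t3 := by
  refine ⟨?_, ?_, ?_⟩
  · have hc := congrArg (fun w : Tr r1 r2 r3 => w.2.1.1) h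
    simp only [add_proj0, add_proj1, add_proj2, add_proj3, add_proj4, add_proj5, add_proj6, add_proj7, add_proj8, add_proj9, smul_proj0, smul_proj1, smul_proj2, smul_proj3, smul_proj4, smul_proj5, smul_proj6, smul_proj7, smul_proj8, smul_proj9] at hc
    simpa [Xg, Yg, Zg] using hc
  · have hc := congrArg (fun w : Tr r1 r2 r3 => w.2.1.2.1) h
    simp only [add_proj0, add_proj1, add_proj2, add_proj3, add_proj4, add_proj5, add_proj6, add_proj7, add_proj8, add_proj9, smul_proj0, smul_proj1, smul_proj2, smul_proj3, smul_proj4, smul_proj5, smul_proj6, smul_proj7, smul_proj8, smul_proj9] at hc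
    simpa [Xg, Yg, Zg] using hc
  · have hc := congrArg (fun w : Tr r1 r2 r3 => w.2.1.2.2) h
    simp only [add_proj0, add_proj1, add_proj2, add_proj3, add_proj4, add_proj5, add_proj6, add_proj7, add_proj8, add_proj9, smul_proj0, smul_proj1, smul_proj2, smul_proj3, smul_proj4, smul_proj5, smul_proj6, smul_proj7, smul_proj8, smul_proj9] at hc
    simpa [Xg, Yg, Zg] using hc

lemma tr_quad {w x1 x2 x3 y1 y2 y3 z1 z2 z3 : ℂ}
    (h : (y1 • Xg r1 r2 r3 + y2 • Yg r1 r2 r3 + y3 • Zg r1 r2 r3) *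
         (x1 • Xg r1 r2 r3 + x2 • Yg r1 r2 r3 + x3 • Zg r1 r2 r3)
       - w • ((z1 • Xg r1 r2 r3 + z2 • Yg r1 r2 r3 + z3 • Zg r1 r2 r3) *
              (z1 • Xg r1 r2 r3 + z2 • Yg r1 r2 r3 + z3 • Zg r1 r2 r3)) = 0) :
    (y1*x2 - w*(z1*z2) = 0) ∧ (y2*x3 - w*(z2*z3) = 0) ∧ (y3*x1 - w*(z3*z1) = 0) ∧
    (y2*x1 + r1*(y3*x3) - w*(z2*z1 + r1*(z3*z3)) = 0) ∧
    (y3*x2 + r2*(y1*x1) - w*(z3*z2 + r2*(z1*z1)) = 0) ∧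
    (y1*x3 + r3*(y2*x2) - w*(z1*z3 + r3*(z2*z2)) = 0) := by
  refine ⟨?_, ?_, ?_, ?_, ?_, ?_⟩
  · have hc := congrArg (fun v : Tr r1 r2 r3 => v.2.2.1) h
    simp only [sub_proj4, smul_proj4, zero_proj4, mul_def] at hc
    simp only [sub_proj4, smul_proj4, zero_proj4, mul_def, mulTr, add_proj0, add_proj1,
      add_proj2, add_proj3, add_proj4, smul_proj0, smul_proj1, smul_proj2, smul_proj3] at hc
    simp only [Xg, Yg, Zg] at hc
    linear_combination hc
  · have hc := congrArg (fun v : Tr r1 r2 r3 => v.2.2.2.1) h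
    simp only [sub_proj5, smul_proj5, zero_proj5, mul_def] at hc
    simp only [sub_proj5, smul_proj5, zero_proj5, mul_def, mulTr, add_proj0, add_proj1,
      add_proj2, add_proj3, add_proj5, smul_proj0, smul_proj1, smul_proj2, smul_proj3] at hc
    simp only [Xg, Yg, Zg] at hc
    linear_combination hc
  · have hc := congrArg (fun v : Tr r1 r2 r3 => v.2.2.2.2.1) h
    simp only [sub_proj6, smul_proj6, zero_proj6, mul_def] at hc
    simp only [sub_proj6, smul_proj6, zero_proj6, mul_def, mulTr, add_proj0, add_proj1,
      add_proj2, add_proj3, add_proj6, smul_proj0, smul_proj1, smul_proj2, smul_proj3] at hc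
    simp only [Xg, Yg, Zg] at hc
    linear_combination hc
  · have hc := congrArg (fun v : Tr r1 r2 r3 => v.2.2.2.2.2.1) h
    simp only [sub_proj7, smul_proj7, zero_proj7, mul_def] at hc
    simp only [sub_proj7, smul_proj7, zero_proj7, mul_def, mulTr, add_proj0, add_proj1,
      add_proj2, add_proj3, add_proj7, smul_proj0, smul_proj1, smul_proj2, smul_proj3] at hc
    simp only [Xg, Yg, Zg] at hc
    linear_combination hc
  · have hc := congrArg (fun v : Tr r1 r2 r3 => v.2.2.2.2.2.2.1) h
    simp only [sub_proj8, smul_proj8, zero_proj8, mul_def] at hc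
    simp only [sub_proj8, smul_proj8, zero_proj8, mul_def, mulTr, add_proj0, add_proj1,
      add_proj2, add_proj3, add_proj8, smul_proj0, smul_proj1, smul_proj2, smul_proj3] at hc
    simp only [Xg, Yg, Zg] at hc
    linear_combination hc
  · have hc := congrArg (fun v : Tr r1 r2 r3 => v.2.2.2.2.2.2.2) h
    simp only [sub_proj9, smul_proj9, zero_proj9, mul_def] at hc
    simp only [sub_proj9, smul_proj9, zero_proj9, mul_def, mulTr, add_proj0, add_proj1,
      add_proj2, add_proj3, add_proj9, smul_proj0, smul_proj1, smul_proj2, smul_proj3] at hc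
    simp only [Xg, Yg, Zg] at hc
    linear_combination hc

variable (av bv cv : ℂ)

lemma quadToTr_mkh (h1 : av * r1 = 1) (h2 : bv * r2 = 1) (h3 : cv * r3 = 1) (w : F3) :
    quadToTr r1 r2 r3 av bv cv h1 h2 h3 (mkh av bv cv w) = trLift r1 r2 r3 w :=
  quadToTr_mk r1 r2 r3 av bv cv h1 h2 h3 w

end Extraction



set_option maxHeartbeats 4000000 in
lemma forward_main (al be ga alp bep gap : ℂ)
    (h0 : al*be*ga ≠ 0) (h1 : al*be*ga ≠ 1) (h0' : alp*bep*gap ≠ 0)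
    (hiso : GrIso (Y*X - al•(Z*Z)) (Z*Y - be•(X*X)) (X*Z - ga•(Y*Y))
                  (Y*X - alp•(Z*Z)) (Z*Y - bep•(X*X)) (X*Z - gap•(Y*Y))) :
    alp*bep*gap = al*be*ga := by
  have hal : al ≠ 0 := fun h => h0 (by rw [h, zero_mul, zero_mul])
  have hbe : be ≠ 0 := fun h => h0 (by rw [h, mul_zero, zero_mul])
  have hga : ga ≠ 0 := fun h => h0 (by rw [h, mul_zero])
  have halp : alp ≠ 0 := fun h => h0' (by rw [h, zero_mul, zero_mul])
  have hbep : bep ≠ 0 := fun h => h0' (by rw [h, mul_zero, zero_mul])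
  have hgap : gap ≠ 0 := fun h => h0' (by rw [h, mul_zero])
  have hialp : alp * alp⁻¹ = 1 := mul_inv_cancel₀ halp
  have hibep : bep * bep⁻¹ = 1 := mul_inv_cancel₀ hbep
  have higap : gap * gap⁻¹ = 1 := mul_inv_cancel₀ hgap
  have hial : al * al⁻¹ = 1 := mul_inv_cancel₀ hal
  have hibe : be * be⁻¹ = 1 := mul_inv_cancel₀ hbe
  have higa : ga * ga⁻¹ = 1 := mul_inv_cancel₀ hga
  obtain ⟨e, hspan⟩ := hiso
  -- coefficient extraction, forward direction
  have memfwd : ∀ w : F3, e (mkh al be ga w) ∈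
      Submodule.span ℂ {mkh alp bep gap X, mkh alp bep gap Y, mkh alp bep gap Z} →
      ∃ c1 c2 c3 : ℂ, e (mkh al be ga w)
        = c1 • mkh alp bep gap X + c2 • mkh alp bep gap Y + c3 • mkh alp bep gap Z :=
    fun w hw => mem_span_triple hw
  have hmem : ∀ w : F3, mkh al be ga w ∈
      genSpan (Y*X - al•(Z*Z)) (Z*Y - be•(X*X)) (X*Z - ga•(Y*Y)) →
      ∃ c1 c2 c3 : ℂ, e (mkh al be ga w)
        = c1 • mkh alp bep gap X + c2 • mkh alp bep gap Y + c3 • mkh alp bep gap Z := by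
    intro w hw
    apply memfwd
    have h2 : e.toLinearMap (mkh al be ga w) ∈
        genSpan (Y*X - alp•(Z*Z)) (Z*Y - bep•(X*X)) (X*Z - gap•(Y*Y)) := by
      rw [← hspan]
      exact Submodule.mem_map_of_mem hw
    exact h2
  obtain ⟨a1, a2, a3, hax⟩ := hmem X (Submodule.subset_span (by simp [genSpan, mkh]))
  obtain ⟨b1, b2, b3, hbx⟩ := hmem Y (Submodule.subset_span (by simp [genSpan, mkh]))
  obtain ⟨c1, c2, c3, hcx⟩ := hmem Z (Submodule.subset_span (by simp [genSpan, mkh]))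
  -- backward direction
  have hmem' : ∀ w : F3, mkh alp bep gap w ∈
      genSpan (Y*X - alp•(Z*Z)) (Z*Y - bep•(X*X)) (X*Z - gap•(Y*Y)) →
      ∃ c1 c2 c3 : ℂ, e.symm (mkh alp bep gap w)
        = c1 • mkh al be ga X + c2 • mkh al be ga Y + c3 • mkh al be ga Z := by
    intro w hw
    rw [← hspan] at hw
    obtain ⟨v, hv, hev⟩ := hw
    have hv2 : e.symm (mkh alp bep gap w) = v := by
      rw [← hev]
      simp
    rw [hv2]
    exact mem_span_triple hv
  obtain ⟨h11, h12, h13, hh1⟩ := hmem' X (Submodule.subset_span (by simp [genSpan, mkh]))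
  obtain ⟨h21, h22, h23, hh2⟩ := hmem' Y (Submodule.subset_span (by simp [genSpan, mkh]))
  obtain ⟨h31, h32, h33, hh3⟩ := hmem' Z (Submodule.subset_span (by simp [genSpan, mkh]))
  -- the A * H = 1 relations, via the degree-one component of the unprimed algebra
  set φ0 := quadToTr al⁻¹ be⁻¹ ga⁻¹ al be ga hial hibe higa with hφ0
  have hrowgen : ∀ (w : F3) (d1 d2 d3 : ℂ),
      e (mkh al be ga w) = d1 • mkh alp bep gap X + d2 • mkh alp bep gap Y
        + d3 • mkh alp bep gap Z →
      mkh al be ga w = (d1*h11 + d2*h21 + d3*h31) • mkh al be ga X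
        + (d1*h12 + d2*h22 + d3*h32) • mkh al be ga Y
        + (d1*h13 + d2*h23 + d3*h33) • mkh al be ga Z := by
    intro w d1 d2 d3 hw
    have h4 : mkh al be ga w = e.symm (e (mkh al be ga w)) := (e.symm_apply_apply _).symm
    rw [h4, hw, map_add, map_add, map_smul, map_smul, map_smul, hh1, hh2, hh3]
    module
  have hrow1 := hrowgen X a1 a2 a3 hax
  have hrow2 := hrowgen Y b1 b2 b3 hbx
  have hrow3 := hrowgen Z c1 c2 c3 hcx
  have hvec : ∀ (w : F3) (d1 d2 d3 : ℂ),
      mkh al be ga w = d1 • mkh al be ga X + d2 • mkh al be ga Y + d3 • mkh al be ga Z →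
      φ0 (mkh al be ga w) = d1 • Xg al⁻¹ be⁻¹ ga⁻¹ + d2 • Yg al⁻¹ be⁻¹ ga⁻¹
        + d3 • Zg al⁻¹ be⁻¹ ga⁻¹ := by
    intro w d1 d2 d3 hw
    rw [hw]
    simp only [map_add, map_smul, hφ0, quadToTr_mkh, trLift_X, trLift_Y, trLift_Z]
  have hX0 : φ0 (mkh al be ga X) = (1:ℂ) • Xg al⁻¹ be⁻¹ ga⁻¹ + (0:ℂ) • Yg al⁻¹ be⁻¹ ga⁻¹
      + (0:ℂ) • Zg al⁻¹ be⁻¹ ga⁻¹ := by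
    simp only [hφ0, quadToTr_mkh, trLift_X, one_smul, zero_smul, add_zero]
  have hY0 : φ0 (mkh al be ga Y) = (0:ℂ) • Xg al⁻¹ be⁻¹ ga⁻¹ + (1:ℂ) • Yg al⁻¹ be⁻¹ ga⁻¹
      + (0:ℂ) • Zg al⁻¹ be⁻¹ ga⁻¹ := by
    simp only [hφ0, quadToTr_mkh, trLift_Y, one_smul, zero_smul, add_zero, zero_add]
  have hZ0 : φ0 (mkh al be ga Z) = (0:ℂ) • Xg al⁻¹ be⁻¹ ga⁻¹ + (0:ℂ) • Yg al⁻¹ be⁻¹ ga⁻¹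
      + (1:ℂ) • Zg al⁻¹ be⁻¹ ga⁻¹ := by
    simp only [hφ0, quadToTr_mkh, trLift_Z, one_smul, zero_smul, add_zero, zero_add]
  obtain ⟨hAH11, hAH12, hAH13⟩ := tr_vec_eq al⁻¹ be⁻¹ ga⁻¹
    ((hX0.symm).trans (hvec X _ _ _ hrow1))
  obtain ⟨hAH21, hAH22, hAH23⟩ := tr_vec_eq al⁻¹ be⁻¹ ga⁻¹
    ((hY0.symm).trans (hvec Y _ _ _ hrow2))
  obtain ⟨hAH31, hAH32, hAH33⟩ := tr_vec_eq al⁻¹ be⁻¹ ga⁻¹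
    ((hZ0.symm).trans (hvec Z _ _ _ hrow3))
  -- the 18 relation equations, via the degree-two component of the primed algebra
  set φ1 := quadToTr alp⁻¹ bep⁻¹ gap⁻¹ alp bep gap hialp hibep higap with hφ1
  have hφa : φ1 (e (mkh al be ga X)) = a1 • Xg alp⁻¹ bep⁻¹ gap⁻¹
      + a2 • Yg alp⁻¹ bep⁻¹ gap⁻¹ + a3 • Zg alp⁻¹ bep⁻¹ gap⁻¹ := by
    rw [hax]
    simp only [map_add, map_smul, hφ1, quadToTr_mkh, trLift_X, trLift_Y, trLift_Z]
  have hφb : φ1 (e (mkh al be ga Y)) = b1 • Xg alp⁻¹ bep⁻¹ gap⁻¹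
      + b2 • Yg alp⁻¹ bep⁻¹ gap⁻¹ + b3 • Zg alp⁻¹ bep⁻¹ gap⁻¹ := by
    rw [hbx]
    simp only [map_add, map_smul, hφ1, quadToTr_mkh, trLift_X, trLift_Y, trLift_Z]
  have hφc : φ1 (e (mkh al be ga Z)) = c1 • Xg alp⁻¹ bep⁻¹ gap⁻¹
      + c2 • Yg alp⁻¹ bep⁻¹ gap⁻¹ + c3 • Zg alp⁻¹ bep⁻¹ gap⁻¹ := by
    rw [hcx]
    simp only [map_add, map_smul, hφ1, quadToTr_mkh, trLift_X, trLift_Y, trLift_Z]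
  have hrelgen : ∀ (w1 w2 w3 : F3) (d : ℂ),
      mkh al be ga (w1*w2 - d•(w3*w3)) = 0 →
      (φ1 (e (mkh al be ga w1))) * (φ1 (e (mkh al be ga w2)))
        - d • ((φ1 (e (mkh al be ga w3))) * (φ1 (e (mkh al be ga w3)))) = 0 := by
    intro w1 w2 w3 d hw
    have hz : mkh al be ga w1 * mkh al be ga w2 - d • (mkh al be ga w3 * mkh al be ga w3)
        = 0 := by
      rw [← map_mul, ← map_mul, ← map_smul, ← map_sub]
      exact hw
    have hz2 := congrArg e hz
    rw [map_sub, map_mul, map_smul, map_mul, map_zero] at hz2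
    have hz3 := congrArg φ1 hz2
    rw [map_sub, map_mul, map_smul, map_mul, map_zero] at hz3
    exact hz3
  have hr1 : mkh al be ga (Y*X - al•(Z*Z)) = 0 := by
    have h5 := RingQuot.mkAlgHom_rel ℂ
      (s := rel3 (Y*X - al•(Z*Z)) (Z*Y - be•(X*X)) (X*Z - ga•(Y*Y)))
      (x := Y*X - al•(Z*Z)) (y := 0) ⟨Or.inl rfl, rfl⟩
    rwa [map_zero] at h5
  have hr2 : mkh al be ga (Z*Y - be•(X*X)) = 0 := by
    have h5 := RingQuot.mkAlgHom_rel ℂ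
      (s := rel3 (Y*X - al•(Z*Z)) (Z*Y - be•(X*X)) (X*Z - ga•(Y*Y)))
      (x := Z*Y - be•(X*X)) (y := 0) ⟨Or.inr (Or.inl rfl), rfl⟩
    rwa [map_zero] at h5
  have hr3 : mkh al be ga (X*Z - ga•(Y*Y)) = 0 := by
    have h5 := RingQuot.mkAlgHom_rel ℂ
      (s := rel3 (Y*X - al•(Z*Z)) (Z*Y - be•(X*X)) (X*Z - ga•(Y*Y)))
      (x := X*Z - ga•(Y*Y)) (y := 0) ⟨Or.inr (Or.inr rfl), rfl⟩
    rwa [map_zero] at h5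
  have hq1 := hrelgen Y X Z al hr1
  have hq2 := hrelgen Z Y X be hr2
  have hq3 := hrelgen X Z Y ga hr3
  rw [hφa, hφb, hφc] at hq1 hq2 hq3
  obtain ⟨r11, r12, r13, r14, r15, r16⟩ := tr_quad alp⁻¹ bep⁻¹ gap⁻¹ hq1
  obtain ⟨r21, r22, r23, r24, r25, r26⟩ := tr_quad alp⁻¹ bep⁻¹ gap⁻¹ hq2
  obtain ⟨r31, r32, r33, r34, r35, r36⟩ := tr_quad alp⁻¹ bep⁻¹ gap⁻¹ hq3
  -- clean the equations and conclude
  exact forward_alg a1 a2 a3 b1 b2 b3 c1 c2 c3 al be ga alp bep gap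
    h11 h12 h13 h21 h22 h23 h31 h32 h33 h1
    hAH11.symm hAH12.symm hAH13.symm hAH21.symm hAH22.symm hAH23.symm
    hAH31.symm hAH32.symm hAH33.symm
    (by linear_combination r11)
    (by linear_combination r12)
    (by linear_combination r13)
    (by linear_combination alp*r14 - (a3*b3 - al*c3^2)*hialp)
    (by linear_combination bep*r15 - (a1*b1 - al*c1^2)*hibep)
    (by linear_combination gap*r16 - (a2*b2 - al*c2^2)*higap)
    (by linear_combination r21)
    (by linear_combination r22)
    (by linear_combination r23)
    (by linear_combination alp*r24 - (b3*c3 - be*a3^2)*hialp)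
    (by linear_combination bep*r25 - (b1*c1 - be*a1^2)*hibep)
    (by linear_combination gap*r26 - (b2*c2 - be*a2^2)*higap)
    (by linear_combination r31)
    (by linear_combination r32)
    (by linear_combination r33)
    (by linear_combination alp*r34 - (a3*c3 - ga*b3^2)*hialp)
    (by linear_combination bep*r35 - (a1*c1 - ga*b1^2)*hibep)
    (by linear_combination gap*r36 - (a2*c2 - ga*b2^2)*higap)

end S3aux


theorem typeS3_iso_iff
    (α β γ α' β' γ' : ℂ)
    (h0 : α * β * γ ≠ 0)
    (h1 : α * β * γ ≠ 1)
    (h0' : α' * β' * γ' ≠ 0)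
    (h1' : α' * β' * γ' ≠ 1)
    : GrIso
      (Y*X - α • (Z*Z))
      (Z*Y - β • (X*X))
      (X*Z - γ • (Y*Y))
      (Y*X - α' • (Z*Z))
      (Z*Y - β' • (X*X))
      (X*Z - γ' • (Y*Y))
      ↔
      (α' * β' * γ' = α * β * γ) := by
  constructor
  · intro hiso
    exact S3aux.forward_main α β γ α' β' γ' h0 h1 h0' hiso
  · intro hp
    exact S3aux.reverse_main α β γ α' β' γ' h0 h0' hp
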